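/- arXiv:1303.4499 — 6 statements merged into one kernel-verified Lean document; each statement's English description precedes it below -/
import Mathlib

section
/- Let p,n be positive integers, μ,η ≥ 0 with μ+η > 0, and let a be a nonzero complex number with |a| ≤ p/(p+n). Let M ≥ p^η, and suppose μ·|a|/(1+|a|) + η·(p+n)|a|/(p+(p+n)|a|) ≤ M/(M+p^η). Then for all z in the open unit disk, |(1+az^n)^μ · (p + a(p+n)z^n)^η − p^η| < M, where the powers are principal. -/
set_option maxHeartbeats 1000000

open Real intervalIntegral

namespace Stmt4Aux

lemma abs_exp_sub_one_sq (ξ : ℂ) :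
    (‖Complex.exp ξ - 1‖)^2
      = Real.exp ξ.re ^ 2 - 2 * Real.exp ξ.re * Real.cos ξ.im + 1 := by
  rw [Complex.sq_norm, Complex.normSq_apply, Complex.sub_re, Complex.sub_im,
    Complex.exp_re, Complex.exp_im, Complex.one_re, Complex.one_im]
  have h := Real.sin_sq_add_cos_sq ξ.im
  ring_nf
  nlinarith [h]

lemma ineqA {ρ : ℝ} (h0 : 0 ≤ ρ) (h1 : ρ ≤ 1) :
    (1 + ρ) * Real.log (1 + ρ) ≤ 2 * ρ * Real.log 2 := by
  have hpos : (0:ℝ) < 1 + ρ := by linarith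
  have l1 : Real.log (1 + ρ) ≤ ρ := by
    have := Real.log_le_sub_one_of_pos hpos
    linarith
  have l2 : Real.log ((1 + ρ)/2) ≤ (1 + ρ)/2 - 1 :=
    Real.log_le_sub_one_of_pos (by linarith)
  have l3 : Real.log ((1 + ρ)/2) = Real.log (1 + ρ) - Real.log 2 :=
    Real.log_div hpos.ne' two_ne_zero
  nlinarith [l1, l2, l3]

lemma ineqB {t : ℝ} (ht : 1 ≤ t) : 2 * t / (1 + t) * Real.log 2 ≤ Real.log (1 + t) := by
  have h1t : (0:ℝ) < 1 + t := by linarith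
  have l2 : Real.log (2/(1+t)) ≤ 2/(1+t) - 1 := Real.log_le_sub_one_of_pos (by positivity)
  have l3 : Real.log (2/(1+t)) = Real.log 2 - Real.log (1+t) :=
    Real.log_div two_ne_zero h1t.ne'
  have hlog2 : Real.log 2 ≤ 1 := by
    have := Real.log_le_sub_one_of_pos (show (0:ℝ) < 2 by norm_num); linarith
  rw [div_mul_eq_mul_div, div_le_iff₀ h1t]
  have h2 : Real.log 2 - Real.log (1+t) ≤ (1 - t)/(1+t) := by
    rw [← l3]
    have : 2/(1+t) - 1 = (1-t)/(1+t) := by field_simp; ring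
    linarith [l2, this.le]
  -- log(1+t) ≥ log 2 + (t-1)/(1+t)
  have h3 : Real.log 2 + (t-1)/(1+t) ≤ Real.log (1+t) := by
    have := h2
    have e : (1-t)/(1+t) = -((t-1)/(1+t)) := by ring
    rw [e] at this; linarith
  have h4 : (2 * t * Real.log 2) ≤ (Real.log 2 + (t-1)/(1+t)) * (1+t) := by
    have e : (Real.log 2 + (t-1)/(1+t)) * (1+t) = Real.log 2 * (1+t) + (t-1) := by
      field_simp
    rw [e]
    nlinarith [hlog2]
  calc 2 * t * Real.log 2 ≤ (Real.log 2 + (t-1)/(1+t)) * (1+t) := h4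
    _ ≤ Real.log (1+t) * (1+t) := mul_le_mul_of_nonneg_right h3 (by linarith)



lemma master {w : ℂ} {m : ℝ} (hm : 1 ≤ m) (hw : ‖w‖ < 1) :
    ‖(1 + w) ^ (m:ℂ) - 1‖ ≤ (1 + ‖w‖) ^ m - 1 := by
  set d := ‖w‖ with hd
  have hd0 : 0 ≤ d := norm_nonneg w
  have hm0 : (0:ℝ) < m := by linarith
  -- the complex path
  have hre : ∀ s : ℝ, s ∈ Set.Icc (0:ℝ) 1 → (1 + (s:ℂ) * w) ∈ Complex.slitPlane := by
    intro s hs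
    left
    have h1 : |((s:ℂ)*w).re| ≤ ‖(s:ℂ)*w‖ := Complex.abs_re_le_norm _
    have h2 : ‖(s:ℂ)*w‖ = s * d := by
      rw [norm_mul, Complex.norm_real, Real.norm_eq_abs, abs_of_nonneg hs.1]
    have h3 : s * d ≤ d := by nlinarith [hs.1, hs.2]
    have : (1 + (s:ℂ)*w).re = 1 + ((s:ℂ)*w).re := by simp
    rw [this]
    have := abs_le.mp h1
    linarith [this.1]
  have hderiv : ∀ s : ℝ, s ∈ Set.uIcc (0:ℝ) 1 →
      HasDerivAt (fun s : ℝ => (1 + (s:ℂ) * w) ^ (m:ℂ))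
        ((m:ℂ) * (1 + (s:ℂ) * w) ^ ((m:ℂ) - 1) * w) s := by
    intro s hs
    rw [Set.uIcc_of_le (by norm_num : (0:ℝ) ≤ 1)] at hs
    have hlin : HasDerivAt (fun z : ℂ => 1 + z * w) w (s:ℂ) := by
      simpa using ((hasDerivAt_id (s:ℂ)).mul_const w).const_add 1
    have hC := HasDerivAt.cpow_const (f := fun z : ℂ => 1 + z * w) (f' := w) (x := (s:ℂ))
      (c := (m:ℂ)) hlin (hre s hs)
    have := hC.comp_ofReal
    simpa using this
  have hcont : ContinuousOn (fun s : ℝ => (m:ℂ) * (1 + (s:ℂ) * w) ^ ((m:ℂ) - 1) * w)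
      (Set.uIcc (0:ℝ) 1) := by
    rw [Set.uIcc_of_le (by norm_num : (0:ℝ) ≤ 1)]
    apply ContinuousOn.mul _ continuousOn_const
    apply ContinuousOn.mul continuousOn_const
    intro s hs
    apply ContinuousAt.continuousWithinAt
    exact ContinuousAt.cpow
      (continuous_const.add ((Complex.continuous_ofReal).mul continuous_const)).continuousAt
      continuousAt_const (hre s hs)
  have hint : IntervalIntegrable (fun s : ℝ => (m:ℂ) * (1 + (s:ℂ) * w) ^ ((m:ℂ) - 1) * w)
      MeasureTheory.volume 0 1 := hcont.intervalIntegrable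
  have hftc : (∫ s in (0:ℝ)..1, (m:ℂ) * (1 + (s:ℂ) * w) ^ ((m:ℂ) - 1) * w)
      = (1 + w) ^ (m:ℂ) - 1 := by
    have := intervalIntegral.integral_eq_sub_of_hasDerivAt hderiv hint
    simpa using this
  -- the real comparison
  have hrderiv : ∀ s : ℝ, s ∈ Set.uIcc (0:ℝ) 1 →
      HasDerivAt (fun s : ℝ => (1 + s * d) ^ m) (m * (1 + s * d) ^ (m - 1) * d) s := by
    intro s hs
    rw [Set.uIcc_of_le (by norm_num : (0:ℝ) ≤ 1)] at hs
    have hpos : (0:ℝ) < 1 + s * d := by nlinarith [hs.1, hs.2, hw]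
    have hlin : HasDerivAt (fun s : ℝ => 1 + s * d) d s := by
      simpa using ((hasDerivAt_id s).mul_const d).const_add 1
    have houter := Real.hasDerivAt_rpow_const (x := 1 + s * d) (p := m) (Or.inl hpos.ne')
    have := houter.comp s hlin
    simpa [Function.comp_def, mul_comm, mul_assoc] using this
  have hrcont : ContinuousOn (fun s : ℝ => m * (1 + s * d) ^ (m - 1) * d)
      (Set.uIcc (0:ℝ) 1) := by
    rw [Set.uIcc_of_le (by norm_num : (0:ℝ) ≤ 1)]
    apply ContinuousOn.mul _ continuousOn_const
    apply ContinuousOn.mul continuousOn_const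
    apply ContinuousOn.rpow_const
    · exact (continuous_const.add (continuous_id.mul continuous_const)).continuousOn
    · intro s hs
      left
      have hpos : (0:ℝ) < 1 + s * d := by nlinarith [hs.1, hs.2, hw]
      exact hpos.ne'
  have hrint : IntervalIntegrable (fun s : ℝ => m * (1 + s * d) ^ (m - 1) * d)
      MeasureTheory.volume 0 1 := hrcont.intervalIntegrable
  have hrftc : (∫ s in (0:ℝ)..1, m * (1 + s * d) ^ (m - 1) * d) = (1 + d) ^ m - 1 := by
    have := intervalIntegral.integral_eq_sub_of_hasDerivAt hrderiv hrint
    rw [this]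
    norm_num
  rw [← hftc, ← hrftc]
  have : ‖(∫ s in (0:ℝ)..1, (m:ℂ) * (1 + (s:ℂ) * w) ^ ((m:ℂ) - 1) * w)‖
      ≤ ∫ s in (0:ℝ)..1, m * (1 + s * d) ^ (m - 1) * d := by
    calc ‖(∫ s in (0:ℝ)..1, (m:ℂ) * (1 + (s:ℂ) * w) ^ ((m:ℂ) - 1) * w)‖
        ≤ ∫ s in (0:ℝ)..1, ‖(m:ℂ) * (1 + (s:ℂ) * w) ^ ((m:ℂ) - 1) * w‖ :=
          intervalIntegral.norm_integral_le_integral_norm (by norm_num)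
      _ ≤ ∫ s in (0:ℝ)..1, m * (1 + s * d) ^ (m - 1) * d := ?_
    apply intervalIntegral.integral_mono_on (by norm_num : (0:ℝ) ≤ 1) hint.norm hrint
    intro s hs
    have hs0 : 0 ≤ s := hs.1
    have hs1 : s ≤ 1 := hs.2
    have habs : ‖1 + (s:ℂ)*w‖ ≤ 1 + s * d := by
      calc ‖1 + (s:ℂ)*w‖ ≤ ‖1‖ + ‖(s:ℂ)*w‖ :=
            norm_add_le _ _
        _ = 1 + s * d := by rw [norm_one, norm_mul, Complex.norm_real, Real.norm_eq_abs, abs_of_nonneg hs0]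
    have hb0 : (0:ℝ) ≤ 1 + s * d := by positivity
    rw [norm_mul, norm_mul]
    have e1 : ‖(m:ℂ)‖ = m := by
      rw [Complex.norm_real, Real.norm_eq_abs, abs_of_pos hm0]
    have e2 : ‖(1 + (s:ℂ)*w) ^ ((m:ℂ) - 1)‖ ≤ (1 + s * d) ^ (m - 1) := by
      have : ((m:ℂ) - 1) = (((m - 1 : ℝ)):ℂ) := by push_cast; ring
      rw [this]
      rw [Complex.norm_cpow_real]
      exact Real.rpow_le_rpow (norm_nonneg _) habs (by linarith)
    have e3 : ‖w‖ = d := rfl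
    rw [e1, e3]
    have h2 : (0:ℝ) ≤ m := le_of_lt hm0
    calc m * ‖(1 + (s:ℂ)*w) ^ ((m:ℂ) - 1)‖ * d
        ≤ m * ((1 + s * d) ^ (m - 1)) * d := by
          apply mul_le_mul_of_nonneg_right _ hd0
          exact mul_le_mul_of_nonneg_left e2 h2
      _ = m * (1 + s * d) ^ (m - 1) * d := rfl
  simpa using this



-- from |exp ξ - 1| < 1 deduce exp ξ.re < 2 cos ξ.im
lemma exp_lt_two_cos {ξ : ℂ} (h : ‖Complex.exp ξ - 1‖ < 1) :
    Real.exp ξ.re < 2 * Real.cos ξ.im := by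
  have h2 : (‖Complex.exp ξ - 1‖)^2 < 1 := by
    nlinarith [norm_nonneg (Complex.exp ξ - 1)]
  rw [abs_exp_sub_one_sq] at h2
  have hE : 0 < Real.exp ξ.re := Real.exp_pos _
  nlinarith [h2, hE]

-- converse direction (strict)
lemma abs_exp_sub_one_lt {ξ : ℂ} (h : Real.exp ξ.re < 2 * Real.cos ξ.im) :
    ‖Complex.exp ξ - 1‖ < 1 := by
  have h2 : (‖Complex.exp ξ - 1‖)^2 < 1 := by
    rw [abs_exp_sub_one_sq]
    nlinarith [Real.exp_pos ξ.re]
  nlinarith [norm_nonneg (Complex.exp ξ - 1)]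

lemma argBound {w : ℂ} {ρ : ℝ} (hw : ‖w‖ ≤ ρ) (hw1 : ‖w‖ < 1)
    (hρ : ρ ≤ 1) (hρ0 : 0 ≤ ρ) :
    |Complex.arg (1 + w)| ≤ π * ρ / (1 + ρ) := by
  have hre : (0:ℝ) < (1 + w).re := by
    have h1 : |w.re| ≤ ‖w‖ := Complex.abs_re_le_norm w
    have := abs_le.mp h1
    simp only [Complex.add_re, Complex.one_re]
    linarith [this.1]
  have hζ : (1 + w) ≠ 0 := by
    intro h
    rw [h] at hre
    simp at hre
  -- |arg| = arcsin (|im| / abs)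
  have harg : Complex.arg (1 + w) = Real.arcsin ((1+w).im / ‖1+w‖) :=
    Complex.arg_of_re_nonneg hre.le
  have habs0 : 0 < ‖1 + w‖ := norm_pos_iff.mpr hζ
  -- key algebraic bound : |im|^2 ≤ ρ^2 * abs^2
  have hsq : ((1+w).im)^2 ≤ ρ^2 * (‖1+w‖)^2 := by
    have h1 : (w.re)^2 + (w.im)^2 ≤ ρ^2 := by
      have := Complex.sq_norm w
      rw [Complex.normSq_apply] at this
      nlinarith [hw, norm_nonneg w]
    have h2 : (‖1+w‖)^2 = (1 + w.re)^2 + (w.im)^2 := by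
      rw [Complex.sq_norm, Complex.normSq_apply]
      simp [Complex.add_re, Complex.add_im]
      ring
    have h3 : (1+w).im = w.im := by simp
    rw [h2, h3]
    nlinarith [sq_nonneg (w.re + ρ^2), mul_nonneg (mul_nonneg hρ0 hρ0)
      (sub_nonneg.mpr h1), sub_nonneg.mpr hρ, sq_nonneg ρ,
      mul_nonneg (sub_nonneg.mpr (by nlinarith : ρ^2 ≤ 1)) (sub_nonneg.mpr h1)]
  have hq : |(1+w).im / ‖1+w‖| ≤ ρ := by
    rw [abs_div, abs_of_pos habs0, div_le_iff₀ habs0]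
    have : |(1+w).im|^2 ≤ (ρ * ‖1+w‖)^2 := by
      rw [sq_abs]; nlinarith [hsq]
    have hrρ : 0 ≤ ρ * ‖1+w‖ := by positivity
    nlinarith [abs_nonneg ((1+w).im), this]
  -- so |arg| ≤ arcsin ρ
  have h1 : |Complex.arg (1+w)| ≤ Real.arcsin ρ := by
    rw [harg]
    rcases abs_le.mp hq with ⟨hl, hr⟩
    rw [abs_le]
    constructor
    · rw [← Real.arcsin_neg]
      exact Real.monotone_arcsin hl
    · exact Real.monotone_arcsin hr
  -- and arcsin ρ ≤ π ρ / (1+ρ)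
  have h2 : Real.arcsin ρ ≤ π * ρ / (1 + ρ) := by
    set s := Real.arcsin ρ with hs
    have hs0 : 0 ≤ s := Real.arcsin_nonneg.mpr hρ0
    have hsπ : s ≤ π / 2 := Real.arcsin_le_pi_div_two ρ
    have hsin : Real.sin s = ρ := Real.sin_arcsin (by linarith) hρ
    -- Jordan : 2 s / π ≤ sin s = ρ
    have hj : 2 * s / π ≤ ρ := by
      have hx : 0 ≤ 2 * s / π := by positivity
      have hx1 : 2 * s / π ≤ 1 := by
        rw [div_le_one Real.pi_pos]; linarith
      have := Real.le_sin_mul hx hx1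
      have he : π / 2 * (2 * s / π) = s := by
        field_simp
      rw [he] at this
      rw [← hsin]; exact this
    have hj' : 2 * s ≤ ρ * π := by
      rw [div_le_iff₀ Real.pi_pos] at hj; linarith
    rw [le_div_iff₀ (by linarith : (0:ℝ) < 1 + ρ)]
    nlinarith [Real.pi_pos, hj', hs0, hρ]
  linarith [h1, h2]

lemma cos_comb {θ₁ θ₂ Y₁ Y₂ : ℝ} (h₁ : 0 ≤ θ₁) (h₂ : 0 ≤ θ₂) (hs : θ₁ + θ₂ ≤ 1)
    (hY₁ : |Y₁| ≤ π/2) (hY₂ : |Y₂| ≤ π/2) :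
    θ₁ * Real.cos Y₁ + θ₂ * Real.cos Y₂ + (1 - θ₁ - θ₂) ≤ Real.cos (θ₁*Y₁ + θ₂*Y₂) := by
  have hconc := _root_.strictConcaveOn_cos_Icc.concaveOn
  have hmemY₁ : Y₁ ∈ Set.Icc (-(π/2)) (π/2) := by
    rcases abs_le.mp hY₁ with ⟨ha, hb⟩; exact ⟨by linarith, hb⟩
  have hmemY₂ : Y₂ ∈ Set.Icc (-(π/2)) (π/2) := by
    rcases abs_le.mp hY₂ with ⟨ha, hb⟩; exact ⟨by linarith, hb⟩
  rcases eq_or_lt_of_le (by positivity : (0:ℝ) ≤ θ₁ + θ₂) with hσ | hσ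
  · have ht1 : θ₁ = 0 := by linarith
    have ht2 : θ₂ = 0 := by linarith
    simp [ht1, ht2]
  · set σ := θ₁ + θ₂ with hσdef
    set u := (θ₁*Y₁ + θ₂*Y₂)/σ with hu
    have humem : u ∈ Set.Icc (-(π/2)) (π/2) := by
      constructor
      · rw [hu, le_div_iff₀ hσ]
        nlinarith [hmemY₁.1, hmemY₂.1, h₁, h₂]
      · rw [hu, div_le_iff₀ hσ]
        nlinarith [hmemY₁.2, hmemY₂.2, h₁, h₂]
    have step1 : (θ₁/σ) * Real.cos Y₁ + (θ₂/σ) * Real.cos Y₂ ≤ Real.cos u := by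
      have h := hconc.2 hmemY₁ hmemY₂ (show (0:ℝ) ≤ θ₁/σ by positivity)
        (show (0:ℝ) ≤ θ₂/σ by positivity) (show θ₁/σ + θ₂/σ = 1 by field_simp; exact hσdef.symm)
      simp only [smul_eq_mul] at h
      have he : θ₁/σ * Y₁ + θ₂/σ * Y₂ = u := by
        rw [hu]; field_simp
      rw [he] at h
      exact h
    have hmem0 : (0:ℝ) ∈ Set.Icc (-(π/2)) (π/2) := by
      constructor <;> [linarith [Real.pi_pos]; linarith [Real.pi_pos]]
    have step2 : σ * Real.cos u + (1 - σ) * Real.cos 0 ≤ Real.cos (σ * u + (1-σ) * 0) := by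
      have h := hconc.2 humem hmem0 (le_of_lt hσ)
        (show (0:ℝ) ≤ 1 - σ by linarith) (show σ + (1 - σ) = 1 by ring)
      simpa [smul_eq_mul] using h
    have he2 : σ * u + (1-σ) * 0 = θ₁*Y₁ + θ₂*Y₂ := by
      rw [hu]; field_simp; ring
    rw [he2, Real.cos_zero] at step2
    have hmul := mul_le_mul_of_nonneg_left step1 (le_of_lt hσ)
    have hσc : σ * ((θ₁/σ) * Real.cos Y₁ + (θ₂/σ) * Real.cos Y₂)
        = θ₁ * Real.cos Y₁ + θ₂ * Real.cos Y₂ := by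
      field_simp
    rw [hσc] at hmul
    have : (1 - θ₁ - θ₂) = (1 - σ) := by rw [hσdef]; ring
    rw [this]
    linarith [hmul, step2]



lemma comb {θ₁ θ₂ X₁ X₂ Y₁ Y₂ : ℝ} (h₁ : 0 ≤ θ₁) (h₂ : 0 ≤ θ₂) (hs : θ₁ + θ₂ ≤ 1)
    (F₁ : Real.exp X₁ < 2 * Real.cos Y₁) (F₂ : Real.exp X₂ < 2 * Real.cos Y₂)
    (hcc : θ₁ * Real.cos Y₁ + θ₂ * Real.cos Y₂ + (1 - θ₁ - θ₂) ≤ Real.cos (θ₁*Y₁ + θ₂*Y₂)) :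
    Real.exp (θ₁*X₁ + θ₂*X₂) < 2 * Real.cos (θ₁*Y₁ + θ₂*Y₂) := by
  have hc₁ : 0 < Real.cos Y₁ := by nlinarith [Real.exp_pos X₁]
  have hc₂ : 0 < Real.cos Y₂ := by nlinarith [Real.exp_pos X₂]
  have hexp : Real.exp (θ₁*X₁ + θ₂*X₂) = (Real.exp X₁)^θ₁ * (Real.exp X₂)^θ₂ := by
    rw [Real.rpow_def_of_pos (Real.exp_pos X₁), Real.rpow_def_of_pos (Real.exp_pos X₂),
      Real.log_exp, Real.log_exp, ← Real.exp_add]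
    ring_nf
  have hAM : (2*Real.cos Y₁)^θ₁ * (2*Real.cos Y₂)^θ₂ * (1:ℝ)^(1-θ₁-θ₂)
      ≤ θ₁*(2*Real.cos Y₁) + θ₂*(2*Real.cos Y₂) + (1-θ₁-θ₂)*1 :=
    Real.geom_mean_le_arith_mean3_weighted h₁ h₂ (by linarith) (by positivity)
      (by positivity) (by norm_num) (by ring)
  rw [Real.one_rpow, mul_one] at hAM
  have hstep : (2*Real.cos Y₁)^θ₁ * (2*Real.cos Y₂)^θ₂
      ≤ 2*Real.cos (θ₁*Y₁+θ₂*Y₂) - (1-θ₁-θ₂) := by linarith [hcc, hAM]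
  have s1 : (Real.exp X₁)^θ₁ ≤ (2*Real.cos Y₁)^θ₁ :=
    Real.rpow_le_rpow (Real.exp_pos X₁).le F₁.le h₁
  have s2 : (Real.exp X₂)^θ₂ ≤ (2*Real.cos Y₂)^θ₂ :=
    Real.rpow_le_rpow (Real.exp_pos X₂).le F₂.le h₂
  have p1 : (0:ℝ) < (Real.exp X₁)^θ₁ := Real.rpow_pos_of_pos (Real.exp_pos X₁) _
  have p2 : (0:ℝ) < (Real.exp X₂)^θ₂ := Real.rpow_pos_of_pos (Real.exp_pos X₂) _
  have q1 : (0:ℝ) < (2*Real.cos Y₁)^θ₁ := Real.rpow_pos_of_pos (by linarith) _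
  have q2 : (0:ℝ) < (2*Real.cos Y₂)^θ₂ := Real.rpow_pos_of_pos (by linarith) _
  rcases eq_or_lt_of_le hs with hσ1 | hσ1
  · -- θ₁ + θ₂ = 1, get strictness from the rpow step
    have hor : 0 < θ₁ ∨ 0 < θ₂ := by
      rcases lt_or_ge 0 θ₁ with h | h
      · exact Or.inl h
      · right; nlinarith
    have hprod : (Real.exp X₁)^θ₁ * (Real.exp X₂)^θ₂
        < (2*Real.cos Y₁)^θ₁ * (2*Real.cos Y₂)^θ₂ := by
      rcases hor with hp | hp
      · have s1' : (Real.exp X₁)^θ₁ < (2*Real.cos Y₁)^θ₁ :=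
          Real.rpow_lt_rpow (Real.exp_pos X₁).le F₁ hp
        calc (Real.exp X₁)^θ₁ * (Real.exp X₂)^θ₂
            < (2*Real.cos Y₁)^θ₁ * (Real.exp X₂)^θ₂ := (mul_lt_mul_iff_left₀ p2).mpr s1'
          _ ≤ (2*Real.cos Y₁)^θ₁ * (2*Real.cos Y₂)^θ₂ :=
              mul_le_mul_of_nonneg_left s2 q1.le
      · have s2' : (Real.exp X₂)^θ₂ < (2*Real.cos Y₂)^θ₂ :=
          Real.rpow_lt_rpow (Real.exp_pos X₂).le F₂ hp
        calc (Real.exp X₁)^θ₁ * (Real.exp X₂)^θ₂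
            ≤ (2*Real.cos Y₁)^θ₁ * (Real.exp X₂)^θ₂ :=
              mul_le_mul_of_nonneg_right s1 p2.le
          _ < (2*Real.cos Y₁)^θ₁ * (2*Real.cos Y₂)^θ₂ := (mul_lt_mul_iff_right₀ q1).mpr s2'
    rw [hexp]
    calc (Real.exp X₁)^θ₁ * (Real.exp X₂)^θ₂
        < (2*Real.cos Y₁)^θ₁ * (2*Real.cos Y₂)^θ₂ := hprod
      _ ≤ 2*Real.cos (θ₁*Y₁+θ₂*Y₂) - (1-θ₁-θ₂) := hstep
      _ ≤ 2*Real.cos (θ₁*Y₁+θ₂*Y₂) := by rw [← hσ1]; simp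
  · rw [hexp]
    calc (Real.exp X₁)^θ₁ * (Real.exp X₂)^θ₂
        ≤ (2*Real.cos Y₁)^θ₁ * (2*Real.cos Y₂)^θ₂ := mul_le_mul s1 s2 p2.le q1.le
      _ ≤ 2*Real.cos (θ₁*Y₁+θ₂*Y₂) - (1-θ₁-θ₂) := hstep
      _ < 2*Real.cos (θ₁*Y₁+θ₂*Y₂) := by linarith


end Stmt4Aux

open Metric Complex

theorem stmt_4 (p n : ℕ) (hp : 0 < p) (hn : 0 < n) (μ η : ℝ)
    (hμ : 0 ≤ μ) (hη : 0 ≤ η) (hμη : 0 < μ + η)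
    (a : ℂ) (ha : a ≠ 0) (habs : ‖a‖ ≤ (p:ℝ) / ((p:ℝ) + (n:ℝ)))
    (M : ℝ) (hM : (p:ℝ) ^ η ≤ M)
    (hineq : μ * (‖a‖ / (1 + ‖a‖))
        + η * (((p:ℝ) + (n:ℝ)) * ‖a‖
            / ((p:ℝ) + ((p:ℝ) + (n:ℝ)) * ‖a‖))
        ≤ M / (M + (p:ℝ) ^ η)) :
    ∀ z ∈ ball (0:ℂ) 1,
      ‖(1 + a * z ^ n) ^ (μ:ℂ)
        * ((p:ℂ) + a * ((p:ℂ) + (n:ℂ)) * z ^ n) ^ (η:ℂ)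
        - (((p:ℝ) ^ η : ℝ) : ℂ)‖ < M := by
  intro z hz
  rw [mem_ball_zero_iff] at hz
  have hp0 : (0:ℝ) < p := Nat.cast_pos.mpr hp
  have hn0 : (0:ℝ) < n := Nat.cast_pos.mpr hn
  have hpn0 : (0:ℝ) < (p:ℝ) + n := by positivity
  set r := ‖a‖ with hr
  have hr0 : 0 < r := norm_pos_iff.mpr ha
  have hr1 : r < 1 := by
    refine lt_of_le_of_lt habs ?_
    rw [div_lt_one hpn0]; linarith
  set bR : ℝ := ((p:ℝ) + n)/p with hbR
  have hbR0 : 0 < bR := by positivity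
  set c : ℝ := bR * r with hc
  have hc0 : 0 < c := by positivity
  have hc1 : c ≤ 1 := by
    rw [hc, hbR, div_mul_eq_mul_div, div_le_one hp0]
    have h := (le_div_iff₀ hpn0).mp habs
    linarith [h, mul_comm r ((p:ℝ)+(n:ℝ))]
  set Pe := (p:ℝ) ^ η with hPe
  have hPe0 : 0 < Pe := Real.rpow_pos_of_pos hp0 η
  have hM0 : 0 < M := lt_of_lt_of_le hPe0 hM
  set t := M / Pe with ht
  have ht1 : 1 ≤ t := (le_div_iff₀ hPe0).mpr (by linarith)
  have ht0 : (0:ℝ) < 1 + t := by linarith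
  set Λ := 2*t/(1+t) with hΛ
  have hΛ1 : 1 ≤ Λ := by rw [hΛ, le_div_iff₀ ht0]; linarith
  have hΛ0 : (0:ℝ) < Λ := by linarith
  -- the perturbations
  set w₁ : ℂ := a * z ^ n with hw₁
  have hd₁ : ‖w₁‖ < r := by
    rw [hw₁, norm_mul, norm_pow]
    have hzn : ‖z‖ ^ n < 1 := by
      apply pow_lt_one₀ (norm_nonneg z) _ hn.ne'
      exact hz
    calc r * ‖z‖ ^ n < r * 1 := by exact mul_lt_mul_of_pos_left hzn hr0
      _ = r := mul_one r
  have hd₁1 : ‖w₁‖ < 1 := hd₁.trans hr1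
  set w₂ : ℂ := (bR : ℂ) * w₁ with hw₂
  have hd₂ : ‖w₂‖ < c := by
    rw [hw₂, norm_mul, Complex.norm_real, Real.norm_eq_abs, abs_of_pos hbR0, hc]
    exact mul_lt_mul_of_pos_left hd₁ hbR0
  have hd₂1 : ‖w₂‖ < 1 := lt_of_lt_of_le hd₂ hc1
  have h1w₁ : (1:ℂ) + w₁ ≠ 0 := by
    intro h
    have : ‖w₁‖ = 1 := by
      have : w₁ = -1 := by linear_combination h
      rw [this]; simp
    linarith
  have h1w₂ : (1:ℂ) + w₂ ≠ 0 := by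
    intro h
    have : ‖w₂‖ = 1 := by
      have : w₂ = -1 := by linear_combination h
      rw [this]; simp
    linarith
  set L₁ := Complex.log (1 + w₁) with hL₁
  set L₂ := Complex.log (1 + w₂) with hL₂
  set m₁ : ℝ := (1+r)/(2*r) with hm₁
  set m₂ : ℝ := (1+c)/(2*c) with hm₂
  have hm₁1 : 1 ≤ m₁ := by rw [hm₁, le_div_iff₀ (by linarith)]; linarith
  have hm₂1 : 1 ≤ m₂ := by rw [hm₂, le_div_iff₀ (by linarith)]; linarith
  have hm₁0 : (0:ℝ) < m₁ := by linarith
  have hm₂0 : (0:ℝ) < m₂ := by linarith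
  -- factor bounds
  have keybound : ∀ ρ : ℝ, 0 < ρ → ρ ≤ 1 → (1 + ρ) ^ ((1+ρ)/(2*ρ)) ≤ 2 := by
    intro ρ hρ0 hρ1
    have hA := Stmt4Aux.ineqA hρ0.le hρ1
    rw [Real.rpow_def_of_pos (by linarith : (0:ℝ) < 1 + ρ)]
    have hlog : Real.log (1+ρ) * ((1+ρ)/(2*ρ)) ≤ Real.log 2 := by
      rw [mul_comm, div_mul_eq_mul_div, div_le_iff₀ (by positivity : (0:ℝ) < 2*ρ)]
      linarith [hA, mul_comm (Real.log (1+ρ)) (1+ρ), mul_comm (Real.log 2) (2*ρ)]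
    calc Real.exp (Real.log (1+ρ) * ((1+ρ)/(2*ρ))) ≤ Real.exp (Real.log 2) :=
          Real.exp_le_exp.mpr hlog
      _ = 2 := Real.exp_log (by norm_num)
  have hfac : ∀ (w : ℂ) (ρ mm : ℝ), ‖w‖ < ρ → ρ ≤ 1 → mm = (1+ρ)/(2*ρ) →
      0 < ρ → ‖(1 + w) ^ ((mm:ℝ):ℂ) - 1‖ < 1 := by
    intro w ρ mm hwρ hρ1 hmmdef hρ0
    have hmm1 : 1 ≤ mm := by rw [hmmdef, le_div_iff₀ (by linarith)]; linarith
    have hw1 : ‖w‖ < 1 := lt_of_lt_of_le hwρ hρ1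
    refine lt_of_le_of_lt (Stmt4Aux.master hmm1 hw1) ?_
    have h1 : (1 + ‖w‖) ^ mm < (1 + ρ) ^ mm :=
      Real.rpow_lt_rpow (by positivity) (by linarith) (by linarith)
    have h2 := keybound ρ hρ0 hρ1
    rw [← hmmdef] at h2
    linarith
  -- factor 1
  have hcp₁ : (1 + w₁) ^ ((m₁:ℝ):ℂ) = Complex.exp (L₁ * (m₁:ℂ)) := by
    rw [Complex.cpow_def_of_ne_zero h1w₁]
  have hF₁ : Real.exp (m₁ * L₁.re) < 2 * Real.cos (m₁ * L₁.im) := by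
    have h := hfac w₁ r m₁ hd₁ hr1.le hm₁ hr0
    rw [hcp₁] at h
    have := Stmt4Aux.exp_lt_two_cos h
    simpa [Complex.mul_re, Complex.mul_im, mul_comm] using this
  have hcp₂ : (1 + w₂) ^ ((m₂:ℝ):ℂ) = Complex.exp (L₂ * (m₂:ℂ)) := by
    rw [Complex.cpow_def_of_ne_zero h1w₂]
  have hF₂ : Real.exp (m₂ * L₂.re) < 2 * Real.cos (m₂ * L₂.im) := by
    have h := hfac w₂ c m₂ hd₂ hc1 hm₂ hc0
    rw [hcp₂] at h
    have := Stmt4Aux.exp_lt_two_cos h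
    simpa [Complex.mul_re, Complex.mul_im, mul_comm] using this
  -- argument bounds
  have hY₁ : |m₁ * L₁.im| ≤ π/2 := by
    have := Stmt4Aux.argBound hd₁.le hd₁1 hr1.le hr0.le
    have harg : L₁.im = Complex.arg (1 + w₁) := by rw [hL₁, Complex.log_im]
    rw [abs_mul, abs_of_pos hm₁0, harg]
    have hb : m₁ * |Complex.arg (1+w₁)| ≤ m₁ * (π * r / (1+r)) :=
      mul_le_mul_of_nonneg_left this hm₁0.le
    have he : m₁ * (π * r / (1+r)) = π/2 := by
      rw [hm₁]; field_simp
    linarith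
  have hY₂ : |m₂ * L₂.im| ≤ π/2 := by
    have := Stmt4Aux.argBound hd₂.le hd₂1 hc1 hc0.le
    have harg : L₂.im = Complex.arg (1 + w₂) := by rw [hL₂, Complex.log_im]
    rw [abs_mul, abs_of_pos hm₂0, harg]
    have hb : m₂ * |Complex.arg (1+w₂)| ≤ m₂ * (π * c / (1+c)) :=
      mul_le_mul_of_nonneg_left this hm₂0.le
    have he : m₂ * (π * c / (1+c)) = π/2 := by
      rw [hm₂]; field_simp
    linarith
  -- weights
  set θ₁ := μ/(m₁*Λ) with hθ₁
  set θ₂ := η/(m₂*Λ) with hθ₂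
  have hθ₁0 : 0 ≤ θ₁ := by positivity
  have hθ₂0 : 0 ≤ θ₂ := by positivity
  -- translate hineq
  have hS : μ * (1/(2*m₁)) + η * (1/(2*m₂)) ≤ Λ/2 := by
    have e₁ : r/(1+r) = 1/(2*m₁) := by rw [hm₁]; field_simp
    have e₂ : ((p:ℝ)+n) * r / ((p:ℝ) + ((p:ℝ)+n)*r) = 1/(2*m₂) := by
      rw [hm₂, hc, hbR]; field_simp
    have e₃ : M/(M+Pe) = Λ/2 := by
      rw [hΛ, ht]; field_simp; ring
    calc μ * (1/(2*m₁)) + η * (1/(2*m₂))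
        = μ * (r/(1+r)) + η * (((p:ℝ)+n) * r / ((p:ℝ) + ((p:ℝ)+n)*r)) := by
          rw [e₁, e₂]
      _ ≤ M/(M+Pe) := hineq
      _ = Λ/2 := e₃
  have hθs : θ₁ + θ₂ ≤ 1 := by
    rw [hθ₁, hθ₂]
    rw [div_add_div _ _ (by positivity : m₁*Λ ≠ 0) (by positivity : m₂*Λ ≠ 0),
      div_le_one (by positivity)]
    have h2 := mul_le_mul_of_nonneg_right hS (show (0:ℝ) ≤ 2*m₁*m₂*Λ by positivity)
    have e₁ : (μ * (1/(2*m₁)) + η * (1/(2*m₂))) * (2*m₁*m₂*Λ)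
        = μ * (m₂*Λ) + η * (m₁*Λ) := by field_simp
    have e₃ : Λ/2 * (2*m₁*m₂*Λ) = m₁*Λ*(m₂*Λ) := by ring
    rw [e₁, e₃] at h2
    linarith
  -- the combined exponent
  set hC := L₁ * (μ:ℂ) + L₂ * (η:ℂ) with hhC
  have hCre : hC.re = μ * L₁.re + η * L₂.re := by
    rw [hhC]; simp [Complex.add_re, Complex.mul_re]; ring
  have hCim : hC.im = μ * L₁.im + η * L₂.im := by
    rw [hhC]; simp [Complex.add_im, Complex.mul_im]; ring
  set ξ := hC * ((Λ⁻¹ : ℝ) : ℂ) with hξ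
  have hξre : ξ.re = θ₁ * (m₁ * L₁.re) + θ₂ * (m₂ * L₂.re) := by
    rw [hξ]
    simp [Complex.mul_re, hCre, hθ₁, hθ₂]
    field_simp
  have hξim : ξ.im = θ₁ * (m₁ * L₁.im) + θ₂ * (m₂ * L₂.im) := by
    rw [hξ]
    simp [Complex.mul_im, hCim, hθ₁, hθ₂]
    field_simp
  have hcc := Stmt4Aux.cos_comb hθ₁0 hθ₂0 hθs hY₁ hY₂
  have hCOMB := Stmt4Aux.comb hθ₁0 hθ₂0 hθs hF₁ hF₂ hcc
  have hζ : ‖Complex.exp ξ - 1‖ < 1 := by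
    apply Stmt4Aux.abs_exp_sub_one_lt
    rw [hξre, hξim]
    exact hCOMB
  have hξimbound : |ξ.im| ≤ π/2 := by
    rw [hξim]
    calc |θ₁ * (m₁ * L₁.im) + θ₂ * (m₂ * L₂.im)|
        ≤ θ₁ * |m₁ * L₁.im| + θ₂ * |m₂ * L₂.im| := by
          refine (abs_add_le _ _).trans ?_
          rw [abs_mul θ₁ (m₁ * L₁.im), abs_mul θ₂ (m₂ * L₂.im), _root_.abs_of_nonneg hθ₁0, _root_.abs_of_nonneg hθ₂0]
      _ ≤ θ₁ * (π/2) + θ₂ * (π/2) := by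
          apply add_le_add
          · exact mul_le_mul_of_nonneg_left hY₁ hθ₁0
          · exact mul_le_mul_of_nonneg_left hY₂ hθ₂0
      _ ≤ π/2 := by
          have hh := mul_le_mul_of_nonneg_right hθs (le_of_lt (half_pos Real.pi_pos))
          rw [one_mul] at hh
          calc θ₁ * (π/2) + θ₂ * (π/2) = (θ₁ + θ₂) * (π/2) := by ring
            _ ≤ π/2 := hh
  -- ζ^Λ = exp hC
  have hζΛ : (Complex.exp ξ) ^ ((Λ:ℝ):ℂ) = Complex.exp hC := by
    rw [Complex.cpow_def_of_ne_zero (Complex.exp_ne_zero ξ), Complex.log_exp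
      (by linarith [abs_le.mp hξimbound, Real.pi_pos, (abs_le.mp hξimbound).1] : -π < ξ.im)
      (by linarith [(abs_le.mp hξimbound).2, Real.pi_pos] : ξ.im ≤ π)]
    rw [hξ, mul_assoc, ← Complex.ofReal_mul, inv_mul_cancel₀ hΛ0.ne', Complex.ofReal_one,
      mul_one]
  -- master applied to exp ξ
  have hMAST : ‖Complex.exp hC - 1‖ < t := by
    have h1 : (1:ℂ) + (Complex.exp ξ - 1) = Complex.exp ξ := by ring
    have h := Stmt4Aux.master (w := Complex.exp ξ - 1) hΛ1 hζ
    rw [h1, hζΛ] at h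
    have h2 : (1 + ‖Complex.exp ξ - 1‖) ^ Λ < 2 ^ Λ :=
      Real.rpow_lt_rpow (by positivity) (by linarith) hΛ0
    have h3 : (2:ℝ) ^ Λ ≤ 1 + t := by
      have hB := Stmt4Aux.ineqB ht1
      rw [Real.rpow_def_of_pos (by norm_num : (0:ℝ) < 2)]
      calc Real.exp (Real.log 2 * Λ) ≤ Real.exp (Real.log (1+t)) := by
            apply Real.exp_le_exp.mpr
            rw [hΛ]; rw [mul_comm]; exact hB
        _ = 1 + t := Real.exp_log ht0
    linarith
  -- reassemble the goal
  have hrw2 : (p:ℂ) + a * ((p:ℂ) + (n:ℂ)) * z ^ n = (p:ℂ) * (1 + w₂) := by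
    rw [hw₂, hw₁, hbR]
    have hpC : (p:ℂ) ≠ 0 := Nat.cast_ne_zero.mpr hp.ne'
    push_cast
    field_simp
  have hpC : (p:ℂ) ≠ 0 := Nat.cast_ne_zero.mpr hp.ne'
  have hlogp : Complex.log ((p:ℂ) * (1 + w₂)) = (Real.log p : ℂ) + L₂ := by
    rw [hL₂]
    have : (p:ℂ) = ((p:ℝ) : ℂ) := by push_cast; rfl
    rw [this, Complex.log_ofReal_mul hp0 h1w₂]
  have hcpμ : (1 + w₁) ^ ((μ:ℝ):ℂ) = Complex.exp (L₁ * (μ:ℂ)) :=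
    Complex.cpow_def_of_ne_zero h1w₁ _
  have hcpη : ((p:ℂ) * (1 + w₂)) ^ ((η:ℝ):ℂ)
      = Complex.exp (((Real.log p : ℂ) + L₂) * (η:ℂ)) := by
    rw [Complex.cpow_def_of_ne_zero (mul_ne_zero hpC h1w₂), hlogp]
  have hPeC : ((Pe:ℝ):ℂ) = Complex.exp ((η * Real.log p : ℝ) : ℂ) := by
    rw [hPe, Real.rpow_def_of_pos hp0, ← Complex.ofReal_exp]
    norm_num [mul_comm]
  have hgoal : (1 + a * z ^ n) ^ (μ:ℂ) * ((p:ℂ) + a * ((p:ℂ) + (n:ℂ)) * z ^ n) ^ (η:ℂ)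
      - ((Pe:ℝ):ℂ)
      = Complex.exp ((η * Real.log p : ℝ) : ℂ) * (Complex.exp hC - 1) := by
    have e1 : Complex.exp (L₁ * (μ:ℂ)) * Complex.exp (((Real.log p : ℂ) + L₂) * (η:ℂ))
        = Complex.exp ((η * Real.log p : ℝ) : ℂ) * Complex.exp hC := by
      rw [← Complex.exp_add, ← Complex.exp_add, hhC]
      congr 1
      push_cast
      ring
    rw [hrw2, hcpμ, hcpη, e1, hPeC]
    ring
  rw [hgoal, norm_mul, Complex.norm_exp]
  have hre : ((η * Real.log p : ℝ) : ℂ).re = η * Real.log p := Complex.ofReal_re _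
  rw [hre]
  have hexpPe : Real.exp (η * Real.log p) = Pe := by
    rw [hPe, Real.rpow_def_of_pos hp0, mul_comm]
  rw [hexpPe]
  calc Pe * ‖Complex.exp hC - 1‖ < Pe * t :=
        mul_lt_mul_of_pos_left hMAST hPe0
    _ = M := by rw [ht]; field_simp
end

section
/- Let p be a positive integer, γ ≥ 0, and let a be a nonzero complex number with |a| ≤ p. Let M ≥ p^γ and suppose |a| + γ·|a|/(p+|a|) ≤ M/(M+p^γ). Then for all z in the open unit disk, |e^{az}·(p+az)^γ − p^γ| < M, where (p+az)^γ denotes the principal power. -/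
open Metric Complex

private lemma auxlog {u : ℝ} (h0 : 0 ≤ u) (h1 : u < 1) :
    u + u ^ 2 / 2 ≤ -Real.log (1 - u) := by
  have h : HasSum (fun n : ℕ => u ^ (n + 1) / (n + 1)) (-Real.log (1 - u)) :=
    Real.hasSum_pow_div_log_of_abs_lt_one (by rwa [_root_.abs_of_nonneg h0])
  have h2 := sum_le_hasSum (Finset.range 2) (fun i _ => by positivity) h
  simp only [Finset.sum_range_succ, Finset.sum_range_zero] at h2
  norm_num at h2
  linarith

private lemma abs_exp_sub_one_le' (v : ℂ) :
    ‖Complex.exp v - 1‖ ≤ Real.exp ‖v‖ - 1 := by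
  have hc : HasSum (fun n : ℕ => v ^ n / n.factorial) (Complex.exp v) := by
    rw [Complex.exp_eq_exp_ℂ]
    exact NormedSpace.expSeries_div_hasSum_exp v
  have hr : HasSum (fun n : ℕ => (‖v‖) ^ n / n.factorial) (Real.exp ‖v‖) := by
    rw [Real.exp_eq_exp_ℝ]
    exact NormedSpace.expSeries_div_hasSum_exp _
  have hc1 : HasSum (fun n : ℕ => v ^ (n + 1) / ((n+1).factorial : ℕ))
      (Complex.exp v - 1) := by
    have h' := (hasSum_nat_add_iff' (f := fun n : ℕ => v ^ n / (n.factorial : ℕ)) 1).mpr hc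
    simpa using h'
  have hr1 : HasSum (fun n : ℕ => (‖v‖) ^ (n + 1) / ((n+1).factorial : ℕ))
      (Real.exp ‖v‖ - 1) := by
    have h' := (hasSum_nat_add_iff'
      (f := fun n : ℕ => (‖v‖) ^ n / (n.factorial : ℕ)) 1).mpr hr
    simpa using h'
  have hnorm : ∀ n : ℕ, ‖v ^ (n + 1) / (((n+1).factorial : ℕ) : ℂ)‖
      = (‖v‖) ^ (n + 1) / (((n+1).factorial : ℕ) : ℝ) := by
    intro n
    rw [norm_div, norm_pow, Complex.norm_natCast]
  have hr1' : HasSum (fun n : ℕ => ‖v ^ (n + 1) / (((n+1).factorial : ℕ) : ℂ)‖)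
      (Real.exp ‖v‖ - 1) := by
    simp_rw [hnorm]; exact hr1
  calc ‖Complex.exp v - 1‖ = ‖Complex.exp v - 1‖ := rfl
    _ = ‖∑' n : ℕ, v ^ (n + 1) / (((n+1).factorial : ℕ) : ℂ)‖ := by rw [hc1.tsum_eq]
    _ ≤ ∑' n : ℕ, ‖v ^ (n + 1) / (((n+1).factorial : ℕ) : ℂ)‖ := norm_tsum_le_tsum_norm hr1'.summable
    _ = Real.exp ‖v‖ - 1 := hr1'.tsum_eq

private lemma crux {p A γ M P : ℝ} (hp : 1 ≤ p) (hA : 0 < A) (hγ : 0 ≤ γ)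
    (hP : 0 < P) (hMP : P ≤ M) (hC : A + γ * (A / (p + A)) ≤ M / (M + P)) :
    A + γ * (A / (p - A)) ≤ Real.log (1 + M / P) := by
  have hM0 : 0 < M := lt_of_lt_of_le hP hMP
  have hMP0 : 0 < M + P := by linarith
  set c := M / (M + P) with hc
  have hc1 : c < 1 := by rw [hc, div_lt_one hMP0]; linarith
  have hpA' : 0 < p + A := by linarith
  have hAc : A ≤ c := by
    have : 0 ≤ γ * (A / (p + A)) := mul_nonneg hγ (div_nonneg hA.le hpA'.le)
    linarith
  have hA1 : A < 1 := lt_of_le_of_lt hAc hc1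
  have hpA : 0 < p - A := by linarith
  have h1A : 0 < 1 - A := by linarith
  have ha : γ * A ≤ (c - A) * (p + A) := by
    have h1 : γ * (A / (p + A)) ≤ c - A := by linarith
    have h2 := mul_le_mul_of_nonneg_right h1 hpA'.le
    calc γ * A = (γ * (A / (p + A))) * (p + A) := by field_simp
      _ ≤ (c - A) * (p + A) := h2
  have key1 : γ * (A / (p - A)) ≤ (c - A) * (1 + A) / (1 - A) := by
    rw [show γ * (A / (p - A)) = γ * A / (p - A) by ring,
      div_le_div_iff₀ hpA h1A]
    nlinarith [mul_le_mul_of_nonneg_right ha h1A.le, mul_nonneg (sub_nonneg.mpr hAc)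
      (mul_nonneg hA.le (sub_nonneg.mpr hp))]
  set t := Real.sqrt (1 - c) with ht
  have h1c : 0 < 1 - c := by linarith
  have hts : t ^ 2 = 1 - c := Real.sq_sqrt h1c.le
  have ht0 : 0 < t := Real.sqrt_pos.mpr h1c
  have ht1 : t ≤ 1 := by
    calc t = Real.sqrt (1 - c) := ht
      _ ≤ Real.sqrt 1 := Real.sqrt_le_sqrt (by linarith)
      _ = 1 := Real.sqrt_one
  have hdiv : (1 - c) / (1 - A) * (1 - A) = 1 - c := by field_simp
  have amgm : 2 * t ≤ (1 - A) + (1 - c) / (1 - A) := by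
    nlinarith [sq_nonneg (1 - A - t), hdiv, hts, h1A]
  have key3 : A + (c - A) * (1 + A) / (1 - A) = 4 - c - 2 * ((1 - A) + (1 - c) / (1 - A)) := by
    field_simp
    ring
  have hlog : 3 - 4 * t + t ^ 2 ≤ -(2 * Real.log t) := by
    have h5 := auxlog (u := 1 - t) (by linarith) (by linarith)
    have h' : (1 : ℝ) - (1 - t) = t := by ring
    rw [h'] at h5
    nlinarith [h5]
  have hlogsum : Real.log (1 + M / P) = -(2 * Real.log t) := by
    have h2 : Real.log (t ^ 2) = 2 * Real.log t := by
      rw [Real.log_pow]; push_cast; ring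
    have h3 : (1 : ℝ) + M / P = (t ^ 2)⁻¹ := by
      rw [hts, hc]
      have h4 : (1:ℝ) - M / (M + P) = P / (M + P) := by
        field_simp; ring
      rw [h4, inv_div]
      field_simp
      try ring
    rw [h3, Real.log_inv, h2]
  rw [hlogsum]
  nlinarith [key1, amgm, key3, hlog, hts]

theorem stmt_7 (p : ℕ) (hp : 0 < p) (γ : ℝ) (hγ : 0 ≤ γ)
    (a : ℂ) (ha : a ≠ 0) (habs : ‖a‖ ≤ (p:ℝ))
    (M : ℝ) (hM : (p:ℝ) ^ γ ≤ M)
    (hineq : ‖a‖ + γ * (‖a‖ / ((p:ℝ) + ‖a‖))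
      ≤ M / (M + (p:ℝ) ^ γ)) :
    ∀ z ∈ ball (0:ℂ) 1,
      ‖Complex.exp (a * z) * ((p:ℂ) + a * z) ^ (γ:ℂ)
        - (((p:ℝ) ^ γ : ℝ) : ℂ)‖ < M := by
  intro z hz
  rw [mem_ball_zero_iff] at hz
  have hp1 : (1:ℝ) ≤ (p:ℝ) := by exact_mod_cast hp
  have hp0 : (0:ℝ) < (p:ℝ) := by linarith
  set A := ‖a‖ with hA
  have hA0 : 0 < A := norm_pos_iff.mpr ha
  have hP : (0:ℝ) < (p:ℝ) ^ γ := Real.rpow_pos_of_pos hp0 γ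
  have hM0 : 0 < M := lt_of_lt_of_le hP hM
  have hc1 : M / (M + (p:ℝ) ^ γ) < 1 := by rw [div_lt_one (by linarith)]; linarith
  have hAc : A ≤ M / (M + (p:ℝ) ^ γ) := by
    have h0 : 0 ≤ γ * (A / ((p:ℝ) + A)) :=
      mul_nonneg hγ (div_nonneg hA0.le (by linarith))
    linarith [hineq]
  have hA1 : A < 1 := lt_of_le_of_lt hAc hc1
  set s := a * z with hs
  have hr : ‖s‖ < A := by
    rw [hs, norm_mul, ← hA]
    calc A * ‖z‖ < A * 1 := by
          apply mul_lt_mul_of_pos_left _ hA0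
          exact hz
      _ = A := mul_one A
  set r := ‖s‖ with hrdef
  have hr0 : 0 ≤ r := norm_nonneg s
  have hrp : r < (p:ℝ) := by linarith
  set w := s / (p:ℂ) with hw
  have hpne : (p:ℂ) ≠ 0 := by
    simp only [ne_eq, Nat.cast_eq_zero]
    omega
  have hwabs : ‖w‖ = r / (p:ℝ) := by
    rw [hw, norm_div, ← hrdef]
    norm_num
  have hwabs1 : ‖w‖ < 1 := by
    rw [hwabs, div_lt_one hp0]; linarith
  have h1w : (1:ℂ) + w ≠ 0 := by
    intro h
    have h2 : ‖w‖ = 1 := by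
      have hw1 : w = -1 := by linear_combination h
      rw [hw1]; simp
    linarith
  have hps : (p:ℂ) + s = (p:ℂ) * (1 + w) := by
    rw [hw]; field_simp
  set v := s + (γ:ℂ) * Complex.log (1 + w) with hv
  have hfactor : Complex.exp s * ((p:ℂ) + s) ^ (γ:ℂ)
      = (((p:ℝ) ^ γ : ℝ) : ℂ) * Complex.exp v := by
    rw [hps, Complex.cpow_def_of_ne_zero (mul_ne_zero hpne h1w)]
    rw [show ((p:ℂ)) = (((p:ℝ)):ℂ) by push_cast; ring]
    rw [Complex.log_ofReal_mul hp0 h1w]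
    rw [Real.rpow_def_of_pos hp0]
    rw [show ((Real.exp (Real.log (p:ℝ) * γ) : ℝ) : ℂ)
      = Complex.exp ((Real.log (p:ℝ) * γ : ℝ) : ℂ) from Complex.ofReal_exp _]
    rw [hv, ← Complex.exp_add, ← Complex.exp_add]
    congr 1
    push_cast
    ring
  have hrw : Complex.exp s * ((p:ℂ) + s) ^ (γ:ℂ) - (((p:ℝ) ^ γ : ℝ) : ℂ)
      = (((p:ℝ) ^ γ : ℝ) : ℂ) * (Complex.exp v - 1) := by
    rw [hfactor]; ring
  rw [hrw, norm_mul, Complex.norm_real, Real.norm_eq_abs, _root_.abs_of_pos hP]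
  -- bound on the log term
  have h1x : 0 < 1 - r / (p:ℝ) := by
    rw [sub_pos, div_lt_one hp0]; linarith
  have hlogw : ‖Complex.log (1 + w)‖ ≤ (r / (p:ℝ)) / (1 - r / (p:ℝ)) := by
    have hb := Complex.norm_log_one_add_le (z := w) hwabs1
    rw [hwabs] at hb
    set x := r / (p:ℝ) with hx
    have hx0 : 0 ≤ x := div_nonneg hr0 hp0.le
    have e : x ^ 2 * (1 - x)⁻¹ / 2 + x = (x ^ 2 / 2 + x * (1 - x)) / (1 - x) := by
      field_simp
    have h6 : x ^ 2 * (1 - x)⁻¹ / 2 + x ≤ x / (1 - x) := by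
      rw [e, div_le_div_iff₀ h1x h1x]
      nlinarith [sq_nonneg x]
    linarith
  -- bound on |v|
  have hvabs : ‖v‖ < A + γ * (A / ((p:ℝ) - A)) := by
    have hγabs : ‖(γ:ℂ)‖ = γ := by
      rw [Complex.norm_real, Real.norm_eq_abs]; exact _root_.abs_of_nonneg hγ
    have habsmul : ‖(γ:ℂ) * Complex.log (1 + w)‖
        = γ * ‖Complex.log (1 + w)‖ := by
      rw [norm_mul, hγabs]
    have h1 : ‖v‖ ≤ r + γ * ‖Complex.log (1 + w)‖ := by
      calc ‖v‖ ≤ ‖s‖ + ‖(γ:ℂ) * Complex.log (1 + w)‖ :=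
            norm_add_le _ _
        _ = r + γ * ‖Complex.log (1 + w)‖ := by rw [habsmul]
    have h2 : (r / (p:ℝ)) / (1 - r / (p:ℝ)) = r / ((p:ℝ) - r) := by
      have hpr : (p:ℝ) - r ≠ 0 := by linarith
      field_simp
      try ring
    have h3 : r / ((p:ℝ) - r) ≤ A / ((p:ℝ) - A) := by
      rw [div_le_div_iff₀ (by linarith) (by linarith)]
      nlinarith
    have h4 : γ * ‖Complex.log (1 + w)‖ ≤ γ * (A / ((p:ℝ) - A)) := by
      apply mul_le_mul_of_nonneg_left _ hγ
      calc ‖Complex.log (1 + w)‖ ≤ (r / (p:ℝ)) / (1 - r / (p:ℝ)) := hlogw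
        _ = r / ((p:ℝ) - r) := h2
        _ ≤ A / ((p:ℝ) - A) := h3
    linarith
  have hcrux := crux hp1 hA0 hγ hP hM hineq
  calc ((p:ℝ) ^ γ) * ‖Complex.exp v - 1‖
      ≤ ((p:ℝ) ^ γ) * (Real.exp ‖v‖ - 1) :=
        mul_le_mul_of_nonneg_left (abs_exp_sub_one_le' v) hP.le
    _ < ((p:ℝ) ^ γ) * (Real.exp (A + γ * (A / ((p:ℝ) - A))) - 1) := by
        apply mul_lt_mul_of_pos_left _ hP
        have := Real.exp_lt_exp.mpr hvabs
        linarith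
    _ ≤ ((p:ℝ) ^ γ) * (Real.exp (Real.log (1 + M / (p:ℝ) ^ γ)) - 1) := by
        apply mul_le_mul_of_nonneg_left _ hP.le
        have := Real.exp_le_exp.mpr hcrux
        linarith
    _ = M := by
        rw [Real.exp_log (by positivity)]
        field_simp; ring
end

section
/- Let p,n be positive integers, 0 ≤ λ ≤ 1, and let f ∈ A(p,n) with F_λ(z)F_λ'(z) ≠ 0 on U\{0}, where F_λ(z) = (1−λ)f(z) + λzf'(z). Let M ≥ p. If Re[ −zF_λ'(z)/F_λ(z) + 1 + zF_λ''(z)/F_λ'(z) ] < nM/(M+p) for all z ∈ U, then |zF_λ'(z)/F_λ(z) − p| < M for all z ∈ U. -/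
open Metric Complex Filter Set

section Aux

lemma alg_lemma (P M u nn : ℝ) (W : ℂ) (hP : 0 < P) (hM : P ≤ M)
    (hnn : 0 ≤ nn) (hu : nn ≤ u) (hW : Complex.normSq W = 1)
    (hq : (P:ℂ) + (M:ℂ) * W ≠ 0) :
    nn * M / (M + P) ≤ (((M * u : ℝ) : ℂ) * W / ((P:ℂ) + (M:ℂ) * W)).re := by
  have hd : 0 < Complex.normSq ((P:ℂ) + (M:ℂ) * W) := Complex.normSq_pos.mpr hq
  rw [Complex.div_re, ← add_div, div_le_div_iff₀ (by linarith) hd]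
  have hx : W.re ^ 2 + W.im ^ 2 = 1 := by
    rw [Complex.normSq_apply] at hW; nlinarith [hW]
  have hx1 : W.re ≤ 1 := by nlinarith [sq_nonneg W.im]
  have hxm : -1 ≤ W.re := by nlinarith [sq_nonneg W.im, sq_nonneg (W.re + 1)]
  simp only [Complex.normSq_apply, Complex.add_re, Complex.add_im, Complex.mul_re,
    Complex.mul_im, Complex.ofReal_re, Complex.ofReal_im]
  set x := W.re
  set y := W.im
  have hM0 : (0:ℝ) ≤ M := hP.le.trans hM
  have h1 : (0:ℝ) ≤ M * ((u - nn) * ((P*x+M)*(M+P))) := by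
    apply mul_nonneg hM0
    apply mul_nonneg (by linarith)
    apply mul_nonneg (by nlinarith) (by linarith)
  have h2 : (0:ℝ) ≤ M * (nn * (P*(1-x)*(M-P))) := by
    apply mul_nonneg hM0
    apply mul_nonneg hnn
    apply mul_nonneg (mul_nonneg hP.le (by linarith)) (by linarith)
  have key : ((M*u*x - 0*y)*(P+(M*x-0*y)) + (M*u*y+0*x)*(0+(M*y+0*x)))*(M+P)
      - nn*M*((P+(M*x-0*y))*(P+(M*x-0*y)) + (0+(M*y+0*x))*(0+(M*y+0*x)))
      = M*((u-nn)*((P*x+M)*(M+P))) + M*(nn*(P*(1-x)*(M-P)))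
        + (M^2*u*(M+P) - nn*M^3)*(x^2+y^2-1) := by ring
  have hzero : x^2+y^2-1 = 0 := by linarith
  rw [hzero, mul_zero, add_zero] at key
  nlinarith [key, h1, h2]

lemma slope_lemma (N : ℝ → ℝ) (d : ℝ) (m : ℕ) (hd : HasDerivAt N d 1)
    (hN1 : N 1 = 1) (hNle : ∀ t : ℝ, 0 < t → t < 1 → N t ≤ t ^ m) : (m : ℝ) ≤ d := by
  have hs : Tendsto (slope N 1) (nhdsWithin 1 (Set.Iio 1)) (nhds d) :=
    (hasDerivAt_iff_tendsto_slope.mp hd).mono_left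
      (nhdsWithin_mono _ (fun x hx => ne_of_lt hx))
  have hG : Tendsto (fun t : ℝ => ∑ i ∈ Finset.range m, t ^ i)
      (nhdsWithin 1 (Set.Iio 1)) (nhds (m : ℝ)) := by
    have hc : Continuous (fun t : ℝ => ∑ i ∈ Finset.range m, t ^ i) :=
      continuous_finset_sum _ fun i _ => continuous_pow i
    have := (hc.tendsto 1).mono_left (nhdsWithin_le_nhds (s := Set.Iio 1))
    simpa using this
  refine le_of_tendsto_of_tendsto hG hs ?_
  filter_upwards [Ioo_mem_nhdsLT_of_mem (show (1:ℝ) ∈ Set.Ioc 0 1 by constructor <;> norm_num)]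
    with t ht
  have ht1 : t - 1 < 0 := by linarith [ht.2]
  have h1 : slope N 1 t = (N t - 1) / (t - 1) := by
    rw [slope_def_field]; rw [hN1]
  rw [h1, le_div_iff_of_neg ht1]
  have := geom_sum_mul t m
  nlinarith [hNle t ht.1 ht.2]

lemma factor_lemma (p n : ℕ) (f : ℂ → ℂ) (hf : AnalyticOnNhd ℂ f (ball 0 1))
    (a : ℕ → ℂ)
    (ha : ∀ z ∈ ball (0:ℂ) 1, HasSum (fun k : ℕ => a k * z ^ (p + n + k)) (f z - z ^ p)) :
    ∃ g : ℂ → ℂ, AnalyticAt ℂ g 0 ∧ ∀ᶠ z in nhds 0, f z - z ^ p = z ^ (p + n) * g z := by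
  set φ : ℂ → ℂ := fun z => f z - z ^ p with hφdef
  have hφ : AnalyticAt ℂ φ 0 :=
    (hf 0 (by simp)).sub ((analyticAt_id).pow _)
  -- bound on coefficients
  have hhalf : (1/2 : ℂ) ∈ ball (0:ℂ) 1 := by
    simp [mem_ball, dist_eq_norm]; norm_num
  have hsum := (ha _ hhalf).summable
  have hbdd : BddAbove (Set.range fun k => ‖a k * (1/2 : ℂ) ^ (p + n + k)‖) :=
    hsum.tendsto_atTop_zero.norm.bddAbove_range
  obtain ⟨C, hC⟩ := hbdd
  have hC' : ∀ k, ‖a k‖ * (1/2 : ℝ) ^ (p + n + k) ≤ C := by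
    intro k
    have := hC (Set.mem_range_self k)
    simpa [norm_mul, norm_pow] using this
  have hC0 : 0 ≤ C := le_trans (by positivity) (hC' 0)
  set C2 : ℝ := C * 2 ^ (p + n) * 2 with hC2def
  have hC20 : 0 ≤ C2 := by positivity
  -- pointwise bound
  have hbound : ∀ z : ℂ, ‖z‖ ≤ 1/4 → ‖φ z‖ ≤ C2 * ‖z‖ ^ (p + n) := by
    intro z hz
    have hz1 : z ∈ ball (0:ℂ) 1 := by
      simp only [mem_ball, dist_zero_right]; linarith
    have hsz := ha z hz1
    have hg : HasSum (fun k : ℕ => (C * 2 ^ (p + n) * ‖z‖ ^ (p + n)) * (1/2 : ℝ) ^ k)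
        ((C * 2 ^ (p + n) * ‖z‖ ^ (p + n)) * 2) := by
      have h := (hasSum_geometric_of_lt_one (by norm_num : (0:ℝ) ≤ 1/2)
        (by norm_num)).mul_left (C * 2 ^ (p + n) * ‖z‖ ^ (p + n))
      rw [show ((1:ℝ) - 1/2)⁻¹ = 2 by norm_num] at h
      exact h
    have hle : ∀ k : ℕ, ‖a k * z ^ (p + n + k)‖
        ≤ (C * 2 ^ (p + n) * ‖z‖ ^ (p + n)) * (1/2 : ℝ) ^ k := by
      intro k
      rw [norm_mul, norm_pow]
      have h1 : ‖a k‖ ≤ C * 2 ^ (p + n + k) := by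
        have h2 : (0:ℝ) < (1/2) ^ (p + n + k) := by positivity
        have := hC' k
        rw [← le_div_iff₀ h2] at this
        calc ‖a k‖ ≤ C / (1/2) ^ (p + n + k) := this
          _ = C * 2 ^ (p + n + k) := by
              rw [div_eq_mul_inv, ← inv_pow]; norm_num
      have h3 : ‖z‖ ^ (p + n + k) ≤ ‖z‖ ^ (p + n) * (1/4 : ℝ) ^ k := by
        rw [pow_add]
        exact mul_le_mul_of_nonneg_left (pow_le_pow_left₀ (norm_nonneg z) hz k)
          (by positivity)
      calc ‖a k‖ * ‖z‖ ^ (p + n + k)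
          ≤ (C * 2 ^ (p + n + k)) * (‖z‖ ^ (p + n) * (1/4 : ℝ) ^ k) := by
            apply mul_le_mul h1 h3 (by positivity) (by positivity)
        _ = (C * 2 ^ (p + n) * ‖z‖ ^ (p + n)) * ((2:ℝ) ^ k * (1/4 : ℝ) ^ k) := by
            rw [pow_add]; ring
        _ = (C * 2 ^ (p + n) * ‖z‖ ^ (p + n)) * (1/2 : ℝ) ^ k := by
            rw [← mul_pow]; norm_num
    have := tsum_of_norm_bounded hg hle
    rw [hsz.tsum_eq] at this
    calc ‖φ z‖ ≤ (C * 2 ^ (p + n) * ‖z‖ ^ (p + n)) * 2 := this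
      _ = C2 * ‖z‖ ^ (p + n) := by rw [hC2def]; ring
  by_cases h0 : ∀ᶠ z in nhds (0:ℂ), φ z = 0
  · exact ⟨0, analyticAt_const, by filter_upwards [h0] with z hz; simpa using hz⟩
  obtain ⟨m, g, hg, hg0, hfac⟩ := hφ.exists_eventuallyEq_pow_smul_nonzero_iff.mpr h0
  simp only [sub_zero, smul_eq_mul] at hfac
  -- m ≥ p + n
  have hm : p + n ≤ m := by
    by_contra hm
    push_neg at hm
    have hd : 0 < p + n - m := by omega
    have hev1 : ∀ᶠ z in nhdsWithin (0:ℂ) {(0:ℂ)}ᶜ,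
        ‖g z‖ ≤ C2 * ‖z‖ ^ (p + n - m) := by
      have hev : ∀ᶠ z in nhds (0:ℂ), ‖z‖ ≤ 1/4 := by
        have : Metric.closedBall (0:ℂ) (1/4) ∈ nhds (0:ℂ) :=
          Metric.closedBall_mem_nhds 0 (by norm_num)
        filter_upwards [this] with z hz
        simpa [Metric.mem_closedBall, dist_zero_right] using hz
      filter_upwards [nhdsWithin_le_nhds hev, nhdsWithin_le_nhds hfac,
        self_mem_nhdsWithin] with z hz hfz (hz0 : z ≠ 0)
      have hzpos : 0 < ‖z‖ ^ m := pow_pos (norm_pos_iff.mpr hz0) m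
      have h4 : ‖z‖ ^ m * ‖g z‖ ≤ ‖z‖ ^ m * (C2 * ‖z‖ ^ (p + n - m)) := by
        have h5 : ‖φ z‖ ≤ C2 * ‖z‖ ^ (p + n) := hbound z hz
        rw [hfz] at h5
        rw [norm_mul, norm_pow] at h5
        have hpow : ‖z‖ ^ m * ‖z‖ ^ (p + n - m) = ‖z‖ ^ (p + n) := by
          rw [← pow_add]; congr 1; omega
        calc ‖z‖ ^ m * ‖g z‖ ≤ C2 * ‖z‖ ^ (p + n) := h5
          _ = ‖z‖ ^ m * (C2 * ‖z‖ ^ (p + n - m)) := by rw [← hpow]; ring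
      exact le_of_mul_le_mul_left h4 hzpos
    have hev2 : ∀ᶠ z in nhdsWithin (0:ℂ) {(0:ℂ)}ᶜ, ‖g 0‖/2 < ‖g z‖ := by
      apply nhdsWithin_le_nhds
      have : ContinuousAt (fun z => ‖g z‖) 0 := hg.continuousAt.norm
      have := continuousAt_const.eventually_lt this
        (half_lt_self (norm_pos_iff.mpr hg0))
      exact this
    have hev3 : ∀ᶠ z in nhdsWithin (0:ℂ) {(0:ℂ)}ᶜ,
        C2 * ‖z‖ ^ (p + n - m) < ‖g 0‖/2 := by
      apply nhdsWithin_le_nhds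
      have hten : Tendsto (fun z : ℂ => C2 * ‖z‖ ^ (p + n - m)) (nhds 0) (nhds 0) := by
        have : Tendsto (fun z : ℂ => ‖z‖) (nhds 0) (nhds 0) := by
          simpa using continuous_norm.tendsto (0:ℂ)
        have := (this.pow (p + n - m)).const_mul C2
        simpa [zero_pow hd.ne'] using this
      exact hten.eventually_lt_const (half_pos (norm_pos_iff.mpr hg0))
    obtain ⟨z, h1, h2⟩ := (hev1.and (hev2.and hev3)).exists
    linarith [h1, h2.1, h2.2]
  refine ⟨fun z => z ^ (m - (p + n)) * g z, ((analyticAt_id).pow _).mul hg, ?_⟩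
  filter_upwards [hfac] with z hz
  have hpow2 : (z:ℂ) ^ m = z ^ (p + n) * z ^ (m - (p + n)) := by
    rw [← pow_add]; congr 1; omega
  rw [show f z - z ^ p = φ z from rfl, hz, hpow2]
  ring

lemma hasDerivAt_normSq_comp {g : ℝ → ℂ} {g' : ℂ} {x : ℝ} (h : HasDerivAt g g' x) :
    HasDerivAt (fun t => Complex.normSq (g t))
      (2 * ((g x).re * g'.re + (g x).im * g'.im)) x := by
  have hre : HasDerivAt (fun t => (g t).re) g'.re x :=
    Complex.reCLM.hasFDerivAt.comp_hasDerivAt x h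
  have him : HasDerivAt (fun t => (g t).im) g'.im x :=
    Complex.imCLM.hasFDerivAt.comp_hasDerivAt x h
  have h2 := (hre.mul hre).add (him.mul him)
  have heq : (fun t => Complex.normSq (g t))
      = fun t => (g t).re * (g t).re + (g t).im * (g t).im := by
    funext t; simp [Complex.normSq_apply]
  rw [heq]
  exact h2.congr_deriv (by ring)

end Aux

set_option maxHeartbeats 1000000 in
theorem stmt_11 (p n : ℕ) (hp : 0 < p) (hn : 0 < n) (lam : ℝ)
    (hlam0 : 0 ≤ lam) (hlam1 : lam ≤ 1)
    (f F : ℂ → ℂ)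
    (hf : AnalyticOnNhd ℂ f (ball 0 1))
    (hser : ∃ a : ℕ → ℂ, ∀ z ∈ ball (0:ℂ) 1,
      HasSum (fun k : ℕ => a k * z ^ (p + n + k)) (f z - z ^ p))
    (hF : ∀ z, F z = (1 - (lam:ℂ)) * f z + (lam:ℂ) * z * deriv f z)
    (hne : ∀ z ∈ ball (0:ℂ) 1, z ≠ 0 → F z * deriv F z ≠ 0)
    (M : ℝ) (hM : (p:ℝ) ≤ M)
    (hhyp : ∀ z ∈ ball (0:ℂ) 1, z ≠ 0 →
      (-(z * deriv F z / F z) + 1 + z * deriv (deriv F) z / deriv F z).re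
        < (n:ℝ) * M / (M + (p:ℝ))) :
    ∀ z ∈ ball (0:ℂ) 1, z ≠ 0 →
      ‖z * deriv F z / F z - (p:ℂ)‖ < M := by
  have hp1 : (1:ℝ) ≤ (p:ℝ) := by exact_mod_cast hp
  have hM0 : (0:ℝ) < M := lt_of_lt_of_le (by linarith) hM
  have hMne : (M:ℂ) ≠ 0 := by
    simpa using Complex.ofReal_ne_zero.mpr hM0.ne'
  obtain ⟨a, ha⟩ := hser
  -- F and deriv F are analytic on the ball
  have hFa : AnalyticOnNhd ℂ F (ball 0 1) := by
    have hFfun : F = fun z => (1 - (lam:ℂ)) * f z + (lam:ℂ) * z * deriv f z := funext hF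
    rw [hFfun]
    exact (analyticOnNhd_const.mul hf).add
      ((analyticOnNhd_const.mul analyticOnNhd_id).mul hf.deriv)
  have hF'a : AnalyticOnNhd ℂ (deriv F) (ball 0 1) := hFa.deriv
  -- local factorization of f
  obtain ⟨g₁, hg₁, hfeq⟩ := factor_lemma p n f hf a ha
  obtain ⟨r, hr0, hrfac⟩ := Metric.eventually_nhds_iff.mp
    (hfeq.and hg₁.eventually_analyticAt)
  set r₁ : ℝ := min r 1 with hr₁def
  have hr₁0 : 0 < r₁ := lt_min hr0 one_pos
  have hr₁1 : r₁ ≤ 1 := min_le_right _ _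
  have hball₁ : ball (0:ℂ) r₁ ⊆ ball 0 1 := ball_subset_ball hr₁1
  have hfeq₁ : ∀ z ∈ ball (0:ℂ) r₁, f z = z ^ p + z ^ (p + n) * g₁ z := by
    intro z hz
    have := (hrfac (y := z) (by
      rw [mem_ball] at hz
      exact lt_of_lt_of_le hz (min_le_left _ _))).1
    linear_combination this
  have hg₁a : AnalyticOnNhd ℂ g₁ (ball 0 r₁) := by
    intro z hz
    exact (hrfac (y := z) (by
      rw [mem_ball] at hz
      exact lt_of_lt_of_le hz (min_le_left _ _))).2
  -- derivative of f on the small ball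
  have hdf : ∀ z ∈ ball (0:ℂ) r₁, HasDerivAt f
      ((p:ℂ) * z ^ (p-1) + (((p:ℂ)+(n:ℂ)) * z ^ (p+n-1) * g₁ z + z ^ (p+n) * deriv g₁ z)) z := by
    intro z hz
    have hder : HasDerivAt (fun ζ : ℂ => ζ ^ p + ζ ^ (p+n) * g₁ ζ)
        ((p:ℂ) * z ^ (p-1) + (((p:ℂ)+(n:ℂ)) * z ^ (p+n-1) * g₁ z + z ^ (p+n) * deriv g₁ z)) z := by
      have h1 := hasDerivAt_pow p z
      have h2 := (hasDerivAt_pow (p+n) z).mul ((hg₁a z hz).differentiableAt.hasDerivAt)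
      have := h1.add h2
      refine HasDerivAt.congr_deriv this ?_
      push_cast
      ring
    apply hder.congr_of_eventuallyEq
    filter_upwards [isOpen_ball.eventually_mem hz] with ζ hζ
    exact hfeq₁ ζ hζ
  -- the constant c
  set c : ℂ := 1 - (lam:ℂ) + (lam:ℂ) * (p:ℂ) with hcdef
  have hcre : c = ((1 - lam + lam * p : ℝ) : ℂ) := by push_cast; ring
  have hcrealpos : (1:ℝ) ≤ 1 - lam + lam * p := by nlinarith
  have hc0 : c ≠ 0 := by
    rw [hcre]
    exact Complex.ofReal_ne_zero.mpr (by linarith)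
  -- B and F on the small ball
  set B : ℂ → ℂ := fun z =>
    (1 - (lam:ℂ)) * g₁ z + (lam:ℂ) * (((p:ℂ)+(n:ℂ)) * g₁ z + z * deriv g₁ z) with hBdef
  have hBa : AnalyticOnNhd ℂ B (ball 0 r₁) := by
    apply (analyticOnNhd_const.mul hg₁a).add
    exact analyticOnNhd_const.mul ((analyticOnNhd_const.mul hg₁a).add
      (analyticOnNhd_id.mul hg₁a.deriv))
  have hFloc : ∀ z ∈ ball (0:ℂ) r₁, F z = c * z ^ p + z ^ (p+n) * B z := by
    intro z hz
    rw [hF z, hfeq₁ z hz, (hdf z hz).deriv, hBdef, hcdef]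
    obtain ⟨p', rfl⟩ : ∃ p', p = p' + 1 := ⟨p - 1, by omega⟩
    obtain ⟨n', rfl⟩ : ∃ n', n = n' + 1 := ⟨n - 1, by omega⟩
    have e1 : p' + 1 - 1 = p' := by omega
    have e2 : p' + 1 + (n' + 1) - 1 = p' + n' + 1 := by omega
    rw [e1, e2]
    push_cast
    ring
  have hdF : ∀ z ∈ ball (0:ℂ) r₁, HasDerivAt F
      (c * (p:ℂ) * z ^ (p-1) + (((p:ℂ)+(n:ℂ)) * z ^ (p+n-1) * B z + z ^ (p+n) * deriv B z)) z := by
    intro z hz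
    have hder : HasDerivAt (fun ζ : ℂ => c * ζ ^ p + ζ ^ (p+n) * B ζ)
        (c * (p:ℂ) * z ^ (p-1) + (((p:ℂ)+(n:ℂ)) * z ^ (p+n-1) * B z + z ^ (p+n) * deriv B z)) z := by
      have h1 := (hasDerivAt_pow p z).const_mul c
      have h2 := (hasDerivAt_pow (p+n) z).mul ((hBa z hz).differentiableAt.hasDerivAt)
      have := h1.add h2
      refine HasDerivAt.congr_deriv this ?_
      push_cast
      ring
    apply hder.congr_of_eventuallyEq
    filter_upwards [isOpen_ball.eventually_mem hz] with ζ hζ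
    exact hFloc ζ hζ
  -- C and D
  set Cc : ℂ → ℂ := fun z => ((p:ℂ)+(n:ℂ)) * B z + z * deriv B z with hCcdef
  have hCca : AnalyticOnNhd ℂ Cc (ball 0 r₁) :=
    (analyticOnNhd_const.mul hBa).add (analyticOnNhd_id.mul hBa.deriv)
  set D : ℂ → ℂ := fun z => c + z ^ n * B z with hDdef
  have hDa : AnalyticOnNhd ℂ D (ball 0 r₁) :=
    analyticOnNhd_const.add ((analyticOnNhd_id.pow n).mul hBa)
  have hzF' : ∀ z ∈ ball (0:ℂ) r₁, z * deriv F z = z ^ p * (c * (p:ℂ) + z ^ n * Cc z) := by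
    intro z hz
    rw [(hdF z hz).deriv, hCcdef]
    obtain ⟨p', rfl⟩ : ∃ p', p = p' + 1 := ⟨p - 1, by omega⟩
    obtain ⟨n', rfl⟩ : ∃ n', n = n' + 1 := ⟨n - 1, by omega⟩
    have e1 : p' + 1 - 1 = p' := by omega
    have e2 : p' + 1 + (n' + 1) - 1 = p' + n' + 1 := by omega
    rw [e1, e2]
    push_cast
    ring
  have hFD : ∀ z ∈ ball (0:ℂ) r₁, F z = z ^ p * D z := by
    intro z hz
    rw [hFloc z hz, hDdef, pow_add]
    ring
  -- shrink so that D is nonvanishing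
  have hD0 : D 0 = c := by
    simp [hDdef, zero_pow hn.ne']
  have hDcont : ContinuousAt D 0 := by
    exact ((hDa 0 (by simp [hr₁0])).continuousAt)
  obtain ⟨r₂', hr₂'0, hr₂'⟩ := Metric.eventually_nhds_iff.mp
    (hDcont.eventually_ne (by rw [hD0]; exact hc0))
  set r₂ : ℝ := min r₂' r₁ with hr₂def
  have hr₂0 : 0 < r₂ := lt_min hr₂'0 hr₁0
  have hr₂r₁ : ball (0:ℂ) r₂ ⊆ ball 0 r₁ := ball_subset_ball (min_le_right _ _)
  have hDne : ∀ z ∈ ball (0:ℂ) r₂, D z ≠ 0 := by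
    intro z hz
    apply hr₂'
    rw [mem_ball] at hz
    exact lt_of_lt_of_le hz (min_le_left _ _)
  -- E₀
  set E₀ : ℂ → ℂ := fun z => (Cc z - (p:ℂ) * B z) / ((M:ℂ) * D z) with hE₀def
  have hE₀a : AnalyticOnNhd ℂ E₀ (ball 0 r₂) := by
    intro z hz
    exact (((hCca z (hr₂r₁ hz)).sub (analyticAt_const.mul (hBa z (hr₂r₁ hz)))).div
      (analyticAt_const.mul (hDa z (hr₂r₁ hz))) (mul_ne_zero hMne (hDne z hz)))
  have hFne : ∀ z ∈ ball (0:ℂ) 1, z ≠ 0 → F z ≠ 0 := by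
    intro z hz hz0
    exact fun h => hne z hz hz0 (by rw [h, zero_mul])
  have hF'ne : ∀ z ∈ ball (0:ℂ) 1, z ≠ 0 → deriv F z ≠ 0 := by
    intro z hz hz0
    exact fun h => hne z hz hz0 (by rw [h, mul_zero])
  have hloc : ∀ z ∈ ball (0:ℂ) r₂, z ≠ 0 →
      z * deriv F z / F z - (p:ℂ) = (M:ℂ) * z ^ n * E₀ z := by
    intro z hz hz0
    have h1 := hzF' z (hr₂r₁ hz)
    have h2 := hFD z (hr₂r₁ hz)
    have hD := hDne z hz
    have hDz : D z = c + z ^ n * B z := rfl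
    have hzp : (z:ℂ)^p ≠ 0 := pow_ne_zero p hz0
    rw [h1, h2, hE₀def]
    field_simp
    rw [hDz]
    ring
  -- global E and w
  set E : ℂ → ℂ := fun z =>
    if z = 0 then E₀ 0 else (z * deriv F z / F z - (p:ℂ)) / ((M:ℂ) * z ^ n) with hEdef
  set w : ℂ → ℂ := fun z => z ^ n * E z with hwdef
  have hEan : AnalyticOnNhd ℂ E (ball 0 1) := by
    intro z hz
    by_cases hz0 : z = 0
    · subst hz0
      apply (hE₀a 0 (by simp [hr₂0])).congr
      filter_upwards [Metric.ball_mem_nhds (0:ℂ) hr₂0] with ζ hζ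
      by_cases hζ0 : ζ = 0
      · subst hζ0; simp [hEdef]
      · rw [hEdef]
        simp only [if_neg hζ0]
        rw [hloc ζ hζ hζ0, eq_div_iff (mul_ne_zero hMne (pow_ne_zero n hζ0))]
        ring
    · have hform : AnalyticAt ℂ
          (fun ζ => (ζ * deriv F ζ / F ζ - (p:ℂ)) / ((M:ℂ) * ζ ^ n)) z := by
        apply AnalyticAt.div
        · exact ((analyticAt_id.mul (hF'a z hz)).div (hFa z hz)
            (hFne z hz hz0)).sub analyticAt_const
        · exact analyticAt_const.mul (analyticAt_id.pow n)
        · exact mul_ne_zero hMne (pow_ne_zero n hz0)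
      apply hform.congr
      filter_upwards [isOpen_compl_singleton.eventually_mem hz0] with ζ hζ
      rw [hEdef]
      simp only [if_neg (Set.mem_compl_singleton_iff.mp hζ)]
  have hwa : AnalyticOnNhd ℂ w (ball 0 1) := fun z hz =>
    (analyticAt_id.pow n).mul (hEan z hz)
  have hw0 : w 0 = 0 := by simp [hwdef, zero_pow hn.ne']
  have hweq : ∀ z : ℂ, z ≠ 0 → (M:ℂ) * w z = z * deriv F z / F z - (p:ℂ) := by
    intro z hz0
    rw [hwdef, hEdef]
    simp only [if_neg hz0]
    have hzn : (z:ℂ)^n ≠ 0 := pow_ne_zero n hz0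
    field_simp
  -- make E and w opaque from now on
  clear_value E w
  -- main argument
  intro z0 hz0b hz00
  by_contra hcon
  push_neg at hcon
  have hz0n : ‖z0‖ < 1 := mem_ball_zero_iff.mp hz0b
  have h1w : 1 ≤ ‖w z0‖ := by
    have h2 : ‖z0 * deriv F z0 / F z0 - (p:ℂ)‖ = M * ‖w z0‖ := by
      rw [← hweq z0 hz00]
      rw [norm_mul, Complex.norm_real, Real.norm_eq_abs, abs_of_pos hM0]
    rw [h2] at hcon
    nlinarith
  -- the minimal modulus point z1
  set S : Set ℂ := closedBall (0:ℂ) ‖z0‖ ∩ (fun z => ‖w z‖) ⁻¹' (Ici 1) with hSdef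
  have hsub : closedBall (0:ℂ) ‖z0‖ ⊆ ball 0 1 := closedBall_subset_ball hz0n
  have hwc : ContinuousOn (fun z => ‖w z‖) (closedBall (0:ℂ) ‖z0‖) :=
    (hwa.continuousOn.mono hsub).norm
  have hScl : IsClosed S := hwc.preimage_isClosed_of_isClosed Metric.isClosed_closedBall isClosed_Ici
  have hScomp : IsCompact S :=
    (isCompact_closedBall (0:ℂ) ‖z0‖).of_isClosed_subset hScl inter_subset_left
  have hSne : S.Nonempty := ⟨z0, by simp [hSdef, mem_closedBall], h1w⟩
  obtain ⟨z1, hz1S, hz1min⟩ := hScomp.exists_isMinOn hSne continuous_norm.continuousOn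
  have hz1r0 : ‖z1‖ ≤ ‖z0‖ := by simpa [mem_closedBall, dist_zero_right] using hz1S.1
  have hz1w : 1 ≤ ‖w z1‖ := hz1S.2
  have hz1ne : z1 ≠ 0 := by
    rintro rfl
    rw [hw0] at hz1w
    norm_num at hz1w
  have hr1pos : 0 < ‖z1‖ := norm_pos_iff.mpr hz1ne
  have hr1lt1 : ‖z1‖ < 1 := lt_of_le_of_lt hz1r0 hz0n
  have hz1ball : z1 ∈ ball (0:ℂ) 1 := mem_ball_zero_iff.mpr hr1lt1
  -- claim 2 : strictly inside radius ‖z1‖, |w| < 1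
  have claim2 : ∀ z : ℂ, ‖z‖ < ‖z1‖ → ‖w z‖ < 1 := by
    intro z hz
    by_contra h
    push_neg at h
    have hzS : z ∈ S := by
      refine ⟨?_, h⟩
      simp only [mem_closedBall, dist_zero_right]
      linarith
    have := hz1min hzS
    simp only [Set.mem_setOf_eq] at this
    exact absurd this (by simpa using not_le.mpr hz)
  -- claim 3 : on the circle of radius ‖z1‖, |w| ≤ 1
  have claim3 : ∀ z : ℂ, ‖z‖ = ‖z1‖ → ‖w z‖ ≤ 1 := by
    intro z hz
    have hzb : z ∈ ball (0:ℂ) 1 := mem_ball_zero_iff.mpr (hz ▸ hr1lt1)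
    have T : Tendsto (fun t : ℝ => ((t:ℂ) * z)) (nhdsWithin 1 (Set.Iio 1)) (nhds z) := by
      have hct : Continuous (fun t : ℝ => ((t:ℂ) * z)) :=
        (Complex.continuous_ofReal.mul continuous_const)
      have := hct.tendsto 1
      simp only [Complex.ofReal_one, one_mul] at this
      exact this.mono_left nhdsWithin_le_nhds
    have T2 : Tendsto (fun t : ℝ => ‖w ((t:ℂ) * z)‖) (nhdsWithin 1 (Set.Iio 1)) (nhds ‖w z‖) :=
      ((hwa z hzb).continuousAt.norm.tendsto).comp T
    apply le_of_tendsto T2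
    filter_upwards [Ioo_mem_nhdsLT_of_mem
      (show (1:ℝ) ∈ Set.Ioc 0 1 from ⟨one_pos, le_refl 1⟩)] with t ht
    apply (claim2 _ _).le
    rw [norm_mul, Complex.norm_real, Real.norm_eq_abs, abs_of_pos ht.1, hz]
    nlinarith [ht.2, hr1pos]
  have hwz1 : ‖w z1‖ = 1 := le_antisymm (claim3 z1 rfl) hz1w
  -- claim 5 : Schwarz-type bound along the radius
  have claim5 : ∀ t : ℝ, 0 < t → t < 1 → ‖w ((t:ℂ) * z1)‖ ≤ t ^ n := by
    intro t ht0 ht1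
    set zt : ℂ := (t:ℂ) * z1 with hztdef
    have hztn : ‖zt‖ = t * ‖z1‖ := by
      rw [hztdef, norm_mul, Complex.norm_real, Real.norm_eq_abs, abs_of_pos ht0]
    have hztlt : ‖zt‖ < ‖z1‖ := by rw [hztn]; nlinarith
    have hstep : ∀ s : ℝ, ‖zt‖ < s → s < ‖z1‖ → ‖w zt‖ * s ^ n ≤ ‖zt‖ ^ n := by
      intro s hs1 hs2
      have hs0 : 0 < s := lt_of_le_of_lt (norm_nonneg zt) hs1
      have hsn : (0:ℝ) < s ^ n := pow_pos hs0 n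
      have hdc : DiffContOnCl ℂ E (ball 0 s) := by
        constructor
        · exact (hEan.mono (ball_subset_ball (by linarith))).differentiableOn
        · apply hEan.continuousOn.mono
          rw [closure_ball (0:ℂ) hs0.ne']
          exact closedBall_subset_ball (by linarith)
      have hfr : ∀ ζ ∈ frontier (ball (0:ℂ) s), ‖E ζ‖ ≤ 1 / s ^ n := by
        intro ζ hζ
        rw [frontier_ball (0:ℂ) hs0.ne'] at hζ
        have hζn : ‖ζ‖ = s := by simpa [mem_sphere, dist_zero_right] using hζ
        have hζ0 : ζ ≠ 0 := by
          intro h; rw [h] at hζn; simp at hζn; linarith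
        have hwζ : ‖w ζ‖ ≤ 1 := (claim2 ζ (by rw [hζn]; exact hs2)).le
        have hwζ' : ‖w ζ‖ = s ^ n * ‖E ζ‖ := by
          rw [hwdef]
          simp only [norm_mul, norm_pow, hζn]
        rw [hwζ'] at hwζ
        rw [le_div_iff₀ hsn]
        linarith [hwζ]
      have hEb : ‖E zt‖ ≤ 1 / s ^ n := by
        apply norm_le_of_forall_mem_frontier_norm_le isBounded_ball hdc hfr
        exact subset_closure (mem_ball_zero_iff.mpr hs1)
      have hwzt : ‖w zt‖ = ‖zt‖ ^ n * ‖E zt‖ := by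
        rw [hwdef]; simp only [norm_mul, norm_pow]
      rw [hwzt]
      calc ‖zt‖ ^ n * ‖E zt‖ * s ^ n ≤ ‖zt‖ ^ n * (1 / s ^ n) * s ^ n := by
            apply mul_le_mul_of_nonneg_right _ hsn.le
            exact mul_le_mul_of_nonneg_left hEb (by positivity)
        _ = ‖zt‖ ^ n := by field_simp
    -- let s → ‖z1‖
    have hlim : ‖w zt‖ * ‖z1‖ ^ n ≤ ‖zt‖ ^ n := by
      have Ts : Tendsto (fun s : ℝ => ‖w zt‖ * s ^ n) (nhdsWithin ‖z1‖ (Set.Iio ‖z1‖))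
          (nhds (‖w zt‖ * ‖z1‖ ^ n)) := by
        have : Continuous (fun s : ℝ => ‖w zt‖ * s ^ n) :=
          continuous_const.mul (continuous_pow n)
        exact (this.tendsto _).mono_left nhdsWithin_le_nhds
      have hne' : (nhdsWithin ‖z1‖ (Set.Iio ‖z1‖)).NeBot := by
        exact nhdsLT_neBot ‖z1‖
      apply le_of_tendsto Ts
      filter_upwards [Ioo_mem_nhdsLT_of_mem
        (show ‖z1‖ ∈ Set.Ioc ‖zt‖ ‖z1‖ from ⟨hztlt, le_refl _⟩)] with s hs
      exact hstep s hs.1 hs.2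
    have hz1n : (0:ℝ) < ‖z1‖ ^ n := pow_pos hr1pos n
    rw [hztn] at hlim
    rw [mul_pow] at hlim
    nlinarith [hlim, norm_nonneg (w zt), hz1n]
  -- derivative data at z1
  have hwd : HasDerivAt w (deriv w z1) z1 := ((hwa z1 hz1ball).differentiableAt).hasDerivAt
  set dw : ℂ := deriv w z1 with hdwdef
  set dc : ℂ := z1 * dw with hdcdef
  set W : ℂ := w z1 with hWdef
  have hWn : Complex.normSq W = 1 := by
    rw [Complex.normSq_eq_norm_sq, hwz1, one_pow]
  -- radial derivative
  have hh : HasDerivAt (fun t : ℝ => ((t:ℂ) * z1)) z1 1 := by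
    simpa using (Complex.ofRealCLM.hasDerivAt (x := (1:ℝ))).mul_const z1
  have hwd1 : HasDerivAt w dw ((fun t : ℝ => ((t:ℂ) * z1)) 1) := by simpa using hwd
  have hg1 : HasDerivAt (fun t : ℝ => w ((t:ℂ) * z1)) (z1 • dw) 1 :=
    HasDerivAt.scomp 1 hwd1 hh
  have hN : HasDerivAt (fun t : ℝ => Complex.normSq (w ((t:ℂ) * z1)))
      (2 * (W.re * dc.re + W.im * dc.im)) 1 := by
    have := hasDerivAt_normSq_comp hg1
    simp only [Complex.ofReal_one, one_mul] at this
    convert this using 2 <;> rw [hdcdef, smul_eq_mul] <;> rw [hWdef]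
  have hure : (n:ℝ) ≤ W.re * dc.re + W.im * dc.im := by
    have h2n := slope_lemma (fun t : ℝ => Complex.normSq (w ((t:ℂ) * z1)))
      (2 * (W.re * dc.re + W.im * dc.im)) (2 * n) hN ?_ ?_
    · push_cast at h2n
      linarith
    · simp only [Complex.ofReal_one, one_mul]
      rw [Complex.normSq_eq_norm_sq, ← hWdef, hwz1, one_pow]
    · intro t ht0 ht1
      have := claim5 t ht0 ht1
      show Complex.normSq (w ((t:ℂ)*z1)) ≤ t^(2*n)
      rw [Complex.normSq_eq_norm_sq]
      calc ‖w ((t:ℂ)*z1)‖ ^ 2 = ‖w ((t:ℂ)*z1)‖^2 := rfl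
        _ ≤ (t ^ n) ^ 2 := by
            apply pow_le_pow_left₀ (norm_nonneg _) this
        _ = t ^ (2 * n) := by rw [← pow_mul, mul_comm]
  -- angular derivative
  have hh2 : HasDerivAt (fun θ : ℝ => Complex.exp ((θ:ℂ) * I) * z1) (I * z1) 0 := by
    have hinner : HasDerivAt (fun θ : ℝ => ((θ:ℂ) * I)) I 0 := by
      simpa using (Complex.ofRealCLM.hasDerivAt (x := (0:ℝ))).mul_const I
    have hexp : HasDerivAt Complex.exp (Complex.exp ((fun θ : ℝ => ((θ:ℂ) * I)) 0))
        ((fun θ : ℝ => ((θ:ℂ) * I)) 0) := Complex.hasDerivAt_exp _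
    have := HasDerivAt.scomp 0 hexp hinner
    simp only [Complex.ofReal_zero, zero_mul, Complex.exp_zero, smul_eq_mul, mul_one] at this
    have := this.mul_const z1
    simpa using this
  have hwd2 : HasDerivAt w dw ((fun θ : ℝ => Complex.exp ((θ:ℂ) * I) * z1) 0) := by
    simpa using hwd
  have hg2 : HasDerivAt (fun θ : ℝ => w (Complex.exp ((θ:ℂ) * I) * z1)) ((I * z1) • dw) 0 :=
    HasDerivAt.scomp 0 hwd2 hh2
  have hA : HasDerivAt (fun θ : ℝ => Complex.normSq (w (Complex.exp ((θ:ℂ) * I) * z1)))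
      (2 * (W.re * (I * dc).re + W.im * (I * dc).im)) 0 := by
    have := hasDerivAt_normSq_comp hg2
    simp only [Complex.ofReal_zero, zero_mul, Complex.exp_zero, one_mul] at this
    convert this using 2 <;>
      rw [hdcdef, smul_eq_mul] <;> rw [hWdef] <;> ring_nf
  have hAmax : IsLocalMax (fun θ : ℝ => Complex.normSq (w (Complex.exp ((θ:ℂ) * I) * z1))) 0 := by
    apply Filter.Eventually.of_forall
    intro θ
    simp only [Complex.ofReal_zero, zero_mul, Complex.exp_zero, one_mul]
    have hcirc : ‖Complex.exp ((θ:ℂ) * I) * z1‖ = ‖z1‖ := by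
      rw [norm_mul, Complex.norm_exp_ofReal_mul_I, one_mul]
    have := claim3 _ hcirc
    rw [Complex.normSq_eq_norm_sq, Complex.normSq_eq_norm_sq, ← hWdef, hwz1, one_pow]
    simpa using pow_le_pow_left₀ (norm_nonneg _) this 2
  have hAzero : 2 * (W.re * (I * dc).re + W.im * (I * dc).im) = 0 :=
    hAmax.hasDerivAt_eq_zero hA
  have huim : W.re * dc.im - W.im * dc.re = 0 := by
    simp only [Complex.mul_re, Complex.mul_im, Complex.I_re, Complex.I_im] at hAzero
    ring_nf at hAzero ⊢
    linarith
  -- u is real, and dc = u • W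
  set u : ℝ := W.re * dc.re + W.im * dc.im with hudef
  have hdcW : dc = (u:ℂ) * W := by
    have hcc : (starRingEnd ℂ) W * dc = (u:ℂ) := by
      apply Complex.ext
      · simp [Complex.mul_re, Complex.conj_re, Complex.conj_im, hudef]
      · simp [Complex.mul_im, Complex.conj_re, Complex.conj_im]
        linarith [huim]
    have := congrArg (fun x => W * x) hcc
    rw [← mul_assoc, Complex.mul_conj, hWn] at this
    simpa [mul_comm] using this
  -- final contradiction
  have hFz1 : F z1 ≠ 0 := hFne z1 hz1ball hz1ne
  have hF'z1 : deriv F z1 ≠ 0 := hF'ne z1 hz1ball hz1ne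
  set q1 : ℂ := (p:ℂ) + (M:ℂ) * W with hq1def
  have hq1 : q1 = z1 * deriv F z1 / F z1 := by
    rw [hq1def, hWdef, hweq z1 hz1ne]; ring
  have hq1ne : q1 ≠ 0 := by
    rw [hq1]
    exact div_ne_zero (mul_ne_zero hz1ne hF'z1) hFz1
  -- the key identity
  have hFd : HasDerivAt F (deriv F z1) z1 := ((hFa z1 hz1ball).differentiableAt).hasDerivAt
  have hF'd : HasDerivAt (deriv F) (deriv (deriv F) z1) z1 :=
    ((hF'a z1 hz1ball).differentiableAt).hasDerivAt
  have hu' : HasDerivAt (fun ζ : ℂ => ζ * deriv F ζ)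
      (1 * deriv F z1 + z1 * deriv (deriv F) z1) z1 := (hasDerivAt_id z1).mul hF'd
  have hdivd : HasDerivAt (fun ζ : ℂ => ζ * deriv F ζ / F ζ)
      (((1 * deriv F z1 + z1 * deriv (deriv F) z1) * F z1
        - z1 * deriv F z1 * deriv F z1) / (F z1) ^ 2) z1 := hu'.div hFd hFz1
  have hQd : HasDerivAt (fun ζ : ℂ => (p:ℂ) + (M:ℂ) * w ζ) ((M:ℂ) * dw) z1 :=
    (hwd.const_mul (M:ℂ)).const_add (p:ℂ)
  have hQR : (fun ζ : ℂ => (p:ℂ) + (M:ℂ) * w ζ) =ᶠ[nhds z1]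
      (fun ζ : ℂ => ζ * deriv F ζ / F ζ) := by
    filter_upwards [(isOpen_ball.inter isOpen_compl_singleton).eventually_mem
      ⟨hz1ball, hz1ne⟩] with ζ hζ
    rw [hweq ζ hζ.2]
    ring
  have hMdw : (M:ℂ) * dw = ((1 * deriv F z1 + z1 * deriv (deriv F) z1) * F z1
      - z1 * deriv F z1 * deriv F z1) / (F z1) ^ 2 := by
    rw [← hQd.deriv, hQR.deriv_eq, hdivd.deriv]
  have hkey : -(z1 * deriv F z1 / F z1) + 1 + z1 * deriv (deriv F) z1 / deriv F z1
      = z1 * ((M:ℂ) * dw) / q1 := by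
    rw [hMdw, hq1]
    field_simp
    ring
  have hineq := hhyp z1 hz1ball hz1ne
  rw [hkey] at hineq
  have hz1Mdw : z1 * ((M:ℂ) * dw) = ((M * u : ℝ) : ℂ) * W := by
    push_cast
    rw [show z1 * ((M:ℂ) * dw) = (M:ℂ) * (z1 * dw) by ring, ← hdcdef, hdcW]
    ring
  rw [hz1Mdw, hq1def] at hineq
  have halg := alg_lemma (p:ℝ) M u (n:ℝ) W (by linarith) hM (by positivity) hure hWn
    (by push_cast; rw [← hq1def]; exact hq1ne)
  push_cast at halg hineq
  linarith
end

section
/- Let p,n be positive integers, 0 ≤ λ ≤ 1, and let f ∈ A(p,n) with F_λ(z)F_λ'(z) ≠ 0 on U\{0}, where F_λ(z) = (1−λ)f(z) + λzf'(z). Let M ≥ 1/p. If Re[ zF_λ'(z)/F_λ(z) − 1 − zF_λ''(z)/F_λ'(z) ] < nMp/(Mp+1) for all z ∈ U, then |F_λ(z)/(zF_λ'(z)) − 1/p| < M for all z ∈ U. -/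
open Metric Complex Filter Set

lemma jack_aux {g φ : ℂ → ℂ} {n : ℕ} (hn : 0 < n)
    (hg : DifferentiableOn ℂ g (ball 0 1))
    (hφ : DifferentiableOn ℂ φ (ball 0 1))
    (hfac : ∀ z ∈ ball (0:ℂ) 1, g z = z ^ n * φ z)
    {z0 : ℂ} (hz0 : z0 ∈ ball (0:ℂ) 1) (hz0ne : z0 ≠ 0) (hgne : g z0 ≠ 0)
    (hmax : ∀ z ∈ closedBall (0:ℂ) (‖z0‖), ‖g z‖ ≤ ‖g z0‖) :
    ∃ s : ℝ, (n : ℝ) ≤ s ∧ z0 * deriv g z0 = (s : ℂ) * g z0 := by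
  set r1 : ℝ := ‖z0‖ with hr1
  have hr1pos : 0 < r1 := by simpa [hr1] using hz0ne
  have hr1lt : r1 < 1 := by simpa [hr1, mem_ball_zero_iff] using hz0
  set M' : ℝ := ‖g z0‖ with hM'
  have hM'pos : 0 < M' := by simpa [hM'] using hgne
  have hsub : closedBall (0:ℂ) r1 ⊆ ball 0 1 := closedBall_subset_ball hr1lt
  have hcl : closure (ball (0:ℂ) r1) = closedBall 0 r1 := closure_ball 0 hr1pos.ne'
  have hfr : frontier (ball (0:ℂ) r1) = sphere 0 r1 := frontier_ball 0 hr1pos.ne'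
  -- Schwarz-type bound : |φ z| ≤ M'/r1^n on closedBall r1
  have hφbd : ∀ z ∈ closedBall (0:ℂ) r1, ‖φ z‖ ≤ M' / r1 ^ n := by
    intro z hz
    have := Complex.norm_le_of_forall_mem_frontier_norm_le (f := φ)
      (U := ball (0:ℂ) r1) isBounded_ball
      (DifferentiableOn.diffContOnCl (by rw [hcl]; exact hφ.mono hsub))
      (C := M' / r1 ^ n) ?_ (z := z) (by rwa [hcl])
    · simpa using this
    · intro w hw
      rw [hfr, mem_sphere_zero_iff_norm] at hw
      have hw' : ‖w‖ = r1 := hw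
      have hwball : w ∈ ball (0:ℂ) 1 := by rw [mem_ball_zero_iff, hw]; exact hr1lt
      have h1 : ‖g w‖ ≤ M' := hmax w (by rw [mem_closedBall_zero_iff]; exact le_of_eq hw)
      have h2 : ‖g w‖ = r1 ^ n * ‖φ w‖ := by
        rw [hfac w hwball]; simp [hw']
      rw [h2] at h1
      rw [le_div_iff₀ (by positivity)]
      linarith
  have hgbd : ∀ z ∈ closedBall (0:ℂ) r1, ‖g z‖ ≤ M' * (‖z‖ / r1) ^ n := by
    intro z hz
    have hzb : z ∈ ball (0:ℂ) 1 := hsub hz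
    have h3 : ‖g z‖ = ‖z‖ ^ n * ‖φ z‖ := by
      rw [hfac z hzb]; simp
    calc ‖g z‖ ≤ ‖z‖ ^ n * (M' / r1 ^ n) := by
          rw [h3]; exact mul_le_mul_of_nonneg_left (hφbd z hz) (by positivity)
      _ = M' * (‖z‖ / r1) ^ n := by rw [div_pow]; ring
  have hgd : HasDerivAt g (deriv g z0) z0 :=
    (hg.differentiableAt (isOpen_ball.mem_nhds hz0)).hasDerivAt
  set d : ℂ := deriv g z0 with hd
  set lc : ℂ := z0 * d / g z0 with hlc
  have hmul : HasDerivAt (fun w : ℂ => g (w * z0)) (d * z0) 1 := by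
    have h1 : HasDerivAt (fun w : ℂ => w * z0) z0 1 := by
      simpa using (hasDerivAt_id (1:ℂ)).mul_const z0
    have h2 : HasDerivAt g d ((1:ℂ) * z0) := by rwa [one_mul]
    exact h2.comp 1 h1
  have hη : HasDerivAt (fun r : ℝ => g ((r : ℂ) * z0) / g z0) lc 1 := by
    have := (hmul.comp_ofReal (z := (1:ℝ))).div_const (g z0)
    simpa [hlc, mul_comm] using this
  set η : ℝ → ℂ := fun r : ℝ => g ((r : ℂ) * z0) / g z0 with hηdef
  have hη1 : η 1 = 1 := by
    simp only [hηdef, Complex.ofReal_one, one_mul]; exact div_self hgne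
  -- Re lc ≥ n
  have hRe : (n : ℝ) ≤ lc.re := by
    have hslope : Tendsto (fun r : ℝ => (slope η 1 r).re)
        (nhdsWithin 1 (Iio 1)) (nhds lc.re) :=
      (Complex.continuous_re.tendsto lc).comp
        ((hasDerivAt_iff_tendsto_slope.1 hη).mono_left
          (nhdsWithin_mono 1 (fun x hx => ne_of_lt hx)))
    have hgeom : Tendsto (fun r : ℝ => ∑ i ∈ Finset.range n, r ^ i)
        (nhdsWithin 1 (Iio 1)) (nhds (n : ℝ)) := by
      have hc : ContinuousAt (fun r : ℝ => ∑ i ∈ Finset.range n, r ^ i) 1 :=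
        Continuous.continuousAt (by fun_prop)
      simpa using hc.continuousWithinAt.tendsto
    refine le_of_tendsto_of_tendsto hgeom hslope ?_
    filter_upwards [Ioo_mem_nhdsLT_of_mem (by constructor <;> norm_num : (1:ℝ) ∈ Ioc 0 1)]
      with r hr
    obtain ⟨hr0, hrlt⟩ := hr
    have hrz : ((r:ℂ) * z0) ∈ closedBall (0:ℂ) r1 := by
      rw [mem_closedBall_zero_iff]
      have : ‖(r:ℂ) * z0‖ = r * r1 := by
        simp [abs_of_pos hr0, hr1]
      rw [this]
      nlinarith
    have habsz : ‖(r:ℂ) * z0‖ = r * r1 := by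
      simp [abs_of_pos hr0, hr1]
    have habs : ‖g ((r:ℂ) * z0)‖ ≤ M' * r ^ n := by
      have h5 := hgbd _ hrz
      rw [habsz, mul_div_cancel_right₀ _ hr1pos.ne'] at h5
      exact h5
    have hre_le : (η r).re ≤ r ^ n := by
      calc (η r).re ≤ ‖η r‖ := Complex.re_le_norm _
        _ = ‖g ((r:ℂ) * z0)‖ / M' := by rw [hηdef]; exact norm_div _ _
        _ ≤ r ^ n := by rw [div_le_iff₀ hM'pos]; linarith
    have hslope_eq : (slope η 1 r).re = ((r:ℝ) - 1)⁻¹ * ((η r).re - 1) := by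
      rw [slope_def_module, Complex.real_smul, Complex.re_ofReal_mul, Complex.sub_re, hη1,
        Complex.one_re]
    rw [hslope_eq]
    have heq2 : ((r:ℝ) - 1)⁻¹ * ((η r).re - 1) = (1 - (η r).re) / (1 - r) := by
      have hne' : r - 1 ≠ 0 := by intro h; rw [sub_eq_zero] at h; exact absurd h (ne_of_lt hrlt)
      rw [eq_div_iff (by intro h; rw [sub_eq_zero] at h; exact absurd h.symm (ne_of_lt hrlt))]
      field_simp
      ring
    rw [heq2, le_div_iff₀ (by linarith)]
    have hgs : (∑ i ∈ Finset.range n, r ^ i) * (r - 1) = r ^ n - 1 := geom_sum_mul r n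
    nlinarith [hre_le]
  -- Im lc = 0
  have hIm : lc.im = 0 := by
    have he : HasDerivAt (fun θ : ℝ => g (z0 * Complex.exp ((θ : ℂ) * I))) (d * (z0 * I)) 0 := by
      have h1 : HasDerivAt (fun w : ℂ => z0 * Complex.exp (w * I)) (z0 * I) 0 := by
        have h0 : HasDerivAt (fun w : ℂ => Complex.exp (w * I)) (Complex.exp ((0:ℂ) * I) * I) 0 := by
          exact ((Complex.hasDerivAt_exp ((0:ℂ) * I)).comp (0:ℂ)
            (by simpa using (hasDerivAt_id (0:ℂ)).mul_const I))
        have := h0.const_mul z0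
        simpa [mul_assoc] using this
      have h2 : HasDerivAt g d (z0 * Complex.exp ((0:ℂ) * I)) := by simpa using hgd
      have h3 := (h2.comp 0 h1).comp_ofReal (z := (0:ℝ))
      simpa using h3
    set γ : ℝ → ℂ := fun θ : ℝ => g (z0 * Complex.exp ((θ : ℂ) * I)) with hγ
    have hγ0 : γ 0 = g z0 := by simp [hγ]
    set v : ℂ := d * (z0 * I) with hv
    have hre2 : HasDerivAt (fun θ => (γ θ).re) v.re 0 :=
      Complex.reCLM.hasFDerivAt.comp_hasDerivAt 0 he
    have him2 : HasDerivAt (fun θ => (γ θ).im) v.im 0 :=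
      Complex.imCLM.hasFDerivAt.comp_hasDerivAt 0 he
    have hψ : HasDerivAt (fun θ => (γ θ).re ^ 2 + (γ θ).im ^ 2)
        (2 * (γ 0).re ^ 1 * v.re + 2 * (γ 0).im ^ 1 * v.im) 0 :=
      (hre2.pow 2).add (him2.pow 2)
    have hsq : ∀ w : ℂ, w.re ^ 2 + w.im ^ 2 = (‖w‖) ^ 2 := fun w => by
      rw [Complex.sq_norm, Complex.normSq_apply]; ring
    have hloc : IsLocalMax (fun θ => (γ θ).re ^ 2 + (γ θ).im ^ 2) 0 := by
      apply Filter.Eventually.of_forall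
      intro θ
      have hmem : z0 * Complex.exp ((θ : ℂ) * I) ∈ closedBall (0:ℂ) r1 := by
        rw [mem_closedBall_zero_iff]
        simp [Complex.norm_exp, hr1]
      have h6 : ‖γ θ‖ ≤ M' := hmax _ hmem
      simp only [hsq, hγ0]
      have h7 : ‖γ 0‖ = M' := by rw [hγ0, hM']
      calc ‖γ θ‖ ^ 2 ≤ M' ^ 2 :=
            pow_le_pow_left₀ (norm_nonneg _) h6 2
        _ = ‖g z0‖ ^ 2 := by rw [hM']
    have hzero := hloc.hasDerivAt_eq_zero hψ
    rw [hγ0] at hzero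
    have hkey : (z0 * d).im * (g z0).re - (z0 * d).re * (g z0).im = 0 := by
      have hv_re : v.re = -(z0 * d).im := by
        rw [hv]; rw [show d * (z0 * I) = (z0 * d) * I by ring]
        exact Complex.mul_I_re _
      have hv_im : v.im = (z0 * d).re := by
        rw [hv]; rw [show d * (z0 * I) = (z0 * d) * I by ring]
        exact Complex.mul_I_im _
      rw [hv_re, hv_im] at hzero
      simp only [pow_one] at hzero
      linarith
    rw [hlc, Complex.div_im, div_sub_div_same, hkey, zero_div]
  refine ⟨lc.re, hRe, ?_⟩
  have hlcre : lc = ((lc.re : ℝ) : ℂ) := by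
    apply Complex.ext <;> simp [hIm]
  rw [← hlcre, hlc, div_mul_cancel₀ _ hgne]


lemma factor_aux {f : ℂ → ℂ} {m : ℕ} (hm : 0 < m)
    (hfd : DifferentiableOn ℂ f (ball 0 1))
    (a : ℕ → ℂ) (ha : ∀ z ∈ ball (0:ℂ) 1, HasSum (fun k => a k * z ^ (m + k)) (f z)) :
    ∃ G : ℂ → ℂ, DifferentiableOn ℂ G (ball 0 1) ∧ ∀ z ∈ ball (0:ℂ) 1, f z = z ^ m * G z := by
  set base : ℂ → ℂ := fun z => f z / z ^ m with hbase
  have hhalf : ((1:ℝ)/2 : ℂ) ∈ ball (0:ℂ) 1 := by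
    rw [mem_ball_zero_iff]; simp; norm_num
  have hs : Summable (fun k => ‖a k‖ * (1/2 : ℝ) ^ k) := by
    have h1 : Summable (fun k => a k * ((1:ℝ)/2 : ℂ) ^ (m + k)) := (ha _ hhalf).summable
    have h2 : Summable (fun k => ‖a k * ((1:ℝ)/2 : ℂ) ^ (m + k)‖) := h1.norm
    have h3 : (fun k => ‖a k * ((1:ℝ)/2 : ℂ) ^ (m + k)‖)
        = fun k => (1/2 : ℝ) ^ m * (‖a k‖ * (1/2 : ℝ) ^ k) := by
      funext k
      rw [norm_mul, norm_pow]
      have : ‖((1:ℝ)/2 : ℂ)‖ = (1/2 : ℝ) := by norm_num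
      rw [this, pow_add]; ring
    rw [h3] at h2
    have h4 := h2.mul_left ((2:ℝ) ^ m)
    refine h4.congr fun k => ?_
    rw [← mul_assoc, ← mul_pow]
    norm_num
  set S0 : ℝ := ∑' k, ‖a k‖ * (1/2 : ℝ) ^ k with hS0
  have hbound : ∀ z ∈ ball (0:ℂ) (1/2) \ {(0:ℂ)}, ‖base z‖ ≤ S0 := by
    rintro z ⟨hz, hzne⟩
    rw [mem_ball_zero_iff] at hz
    have hzne' : z ≠ 0 := hzne
    have hz1 : z ∈ ball (0:ℂ) 1 := by rw [mem_ball_zero_iff]; linarith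
    have hsz := ha z hz1
    have hdiv := hsz.div_const (z ^ m)
    have heq : (fun k => a k * z ^ (m + k) / z ^ m) = fun k => a k * z ^ k := by
      funext k
      rw [pow_add]
      field_simp
    rw [heq] at hdiv
    have hnorm_sum : ∀ k, ‖a k * z ^ k‖ ≤ ‖a k‖ * (1/2 : ℝ) ^ k := by
      intro k
      rw [norm_mul, norm_pow]
      exact mul_le_mul_of_nonneg_left (pow_le_pow_left₀ (norm_nonneg z) hz.le k) (norm_nonneg _)
    have hsummable : Summable (fun k => ‖a k * z ^ k‖) :=
      Summable.of_nonneg_of_le (fun k => norm_nonneg _) hnorm_sum hs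
    calc ‖base z‖ = ‖∑' k, a k * z ^ k‖ := by rw [hbase]; simp only; rw [← hdiv.tsum_eq]
      _ ≤ ∑' k, ‖a k * z ^ k‖ := norm_tsum_le_tsum_norm hsummable
      _ ≤ S0 := Summable.tsum_le_tsum hnorm_sum hsummable hs
  have hbase_diff : ∀ z ∈ ball (0:ℂ) 1, z ≠ 0 → DifferentiableAt ℂ base z := by
    intro z hz hzne
    exact ((hfd.differentiableAt (isOpen_ball.mem_nhds hz)).div
      (differentiableAt_pow m) (pow_ne_zero m hzne))
  have hup : DifferentiableOn ℂ
      (Function.update base 0 (limUnder (nhdsWithin 0 {(0:ℂ)}ᶜ) base)) (ball 0 (1/2)) := by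
    apply Complex.differentiableOn_update_limUnder_of_bddAbove
      (ball_mem_nhds (0:ℂ) (by norm_num))
    · intro z hz
      exact (hbase_diff z (ball_subset_ball (by norm_num) hz.1) hz.2).differentiableWithinAt
    · refine ⟨S0, ?_⟩
      rintro y ⟨z, hz, rfl⟩
      exact hbound z hz
  set G : ℂ → ℂ := Function.update base 0 (limUnder (nhdsWithin 0 {(0:ℂ)}ᶜ) base) with hG
  have hGdiff : DifferentiableOn ℂ G (ball 0 1) := by
    intro z hz
    by_cases hz0 : z = 0
    · subst hz0
      exact (hup.differentiableAt (isOpen_ball.mem_nhds (mem_ball_self (by norm_num)))).differentiableWithinAt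
    · have hev : G =ᶠ[nhds z] base := by
        filter_upwards [isOpen_compl_singleton.mem_nhds (by exact hz0 : z ∈ ({(0:ℂ)}ᶜ : Set ℂ))]
          with w hw
        exact Function.update_of_ne hw _ _
      exact ((hbase_diff z hz hz0).congr_of_eventuallyEq hev).differentiableWithinAt
  refine ⟨G, hGdiff, ?_⟩
  intro z hz
  by_cases hz0 : z = 0
  · subst hz0
    have h0 := ha 0 (by simp)
    have : (fun k => a k * (0:ℂ) ^ (m + k)) = fun _ => 0 := by
      funext k
      rw [zero_pow (by omega : m + k ≠ 0), mul_zero]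
    rw [this] at h0
    have hf0 : f 0 = 0 := h0.unique hasSum_zero
    rw [hf0, zero_pow hm.ne', zero_mul]
  · have hGz : G z = base z := Function.update_of_ne hz0 _ _
    rw [hGz, hbase]
    simp only
    field_simp


set_option maxHeartbeats 1000000 in
lemma arith_aux {M pinv x m' : ℝ} (h1 : 0 < pinv) (h2 : pinv ≤ M) (h3 : M ≤ m') (h4 : x ≤ m') :
    M * (pinv ^ 2 + 2 * pinv * x + m' ^ 2) ≤ (x * pinv + m' ^ 2) * (M + pinv) := by
  nlinarith [mul_nonneg (mul_nonneg h1.le (sub_nonneg.2 h3)) (by linarith : (0:ℝ) ≤ m' + pinv),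
    mul_nonneg (mul_nonneg h1.le (sub_nonneg.2 h2)) (sub_nonneg.2 h4)]



set_option maxHeartbeats 2000000 in
theorem stmt_13 (p n : ℕ) (hp : 0 < p) (hn : 0 < n) (lam : ℝ)
    (hlam0 : 0 ≤ lam) (hlam1 : lam ≤ 1)
    (f F : ℂ → ℂ)
    (hf : AnalyticOnNhd ℂ f (ball 0 1))
    (hser : ∃ a : ℕ → ℂ, ∀ z ∈ ball (0:ℂ) 1,
      HasSum (fun k : ℕ => a k * z ^ (p + n + k)) (f z - z ^ p))
    (hF : ∀ z, F z = (1 - (lam:ℂ)) * f z + (lam:ℂ) * z * deriv f z)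
    (hne : ∀ z ∈ ball (0:ℂ) 1, z ≠ 0 → F z * deriv F z ≠ 0)
    (M : ℝ) (hM : 1 / (p:ℝ) ≤ M)
    (hhyp : ∀ z ∈ ball (0:ℂ) 1, z ≠ 0 →
      (z * deriv F z / F z - 1 - z * deriv (deriv F) z / deriv F z).re
        < (n:ℝ) * M * (p:ℝ) / (M * (p:ℝ) + 1)) :
    ∀ z ∈ ball (0:ℂ) 1, z ≠ 0 →
      ‖F z / (z * deriv F z) - 1 / (p:ℂ)‖ < M := by
  obtain ⟨a, ha⟩ := hser
  obtain ⟨p', rfl⟩ : ∃ q, p = q + 1 := ⟨p - 1, by omega⟩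
  set p : ℕ := p' + 1 with hpdef
  have hpR : (0:ℝ) < (p:ℝ) := by positivity
  have hMpos : 0 < M := lt_of_lt_of_le (by positivity) hM
  have hfd : DifferentiableOn ℂ f (ball 0 1) := hf.differentiableOn
  -- factor f - z^p = z^(p+n) G
  have hsubdiff : DifferentiableOn ℂ (fun z => f z - z ^ p) (ball 0 1) :=
    hfd.sub (differentiable_pow p).differentiableOn
  obtain ⟨G, hGdiff, hGfac⟩ := factor_aux (by omega : 0 < p + n) hsubdiff a ha
  have hGA : AnalyticOnNhd ℂ G (ball 0 1) := hGdiff.analyticOnNhd isOpen_ball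
  have hG'A : AnalyticOnNhd ℂ (deriv G) (ball 0 1) := hGA.deriv
  have hf_eq : ∀ z ∈ ball (0:ℂ) 1, f z = z ^ p + z ^ (p + n) * G z := by
    intro z hz
    have := hGfac z hz
    linear_combination this
  -- derivative of f
  have hdf : ∀ z ∈ ball (0:ℂ) 1, deriv f z
      = (p:ℂ) * z ^ p' + (((p:ℂ) + n) * z ^ (p' + n) * G z + z ^ (p + n) * deriv G z) := by
    intro z hz
    have hev : f =ᶠ[nhds z] fun w => w ^ p + w ^ (p + n) * G w :=
      eventually_of_mem (isOpen_ball.mem_nhds hz) (fun w hw => hf_eq w hw)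
    rw [hev.deriv_eq]
    have h1 : HasDerivAt (fun w : ℂ => w ^ p + w ^ (p + n) * G w)
        ((p:ℂ) * z ^ (p - 1) + (((p + n : ℕ):ℂ) * z ^ (p + n - 1) * G z + z ^ (p + n) * deriv G z))
        z := by
      exact (hasDerivAt_pow p z).add ((hasDerivAt_pow (p + n) z).mul
        ((hGA z hz).differentiableAt.hasDerivAt))
    rw [h1.deriv]
    have e1 : p - 1 = p' := by omega
    have e2 : p + n - 1 = p' + n := by omega
    rw [e1, e2]
    push_cast
    ring
  set lamC : ℂ := (lam : ℂ) with hlamC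
  set α : ℂ := ((1 - lam + lam * p : ℝ) : ℂ) with hα
  have hαne : α ≠ 0 := by
    rw [hα]
    rw [Complex.ofReal_ne_zero]
    have : (1:ℝ) ≤ 1 - lam + lam * p := by
      have : lam * 1 ≤ lam * p := by
        apply mul_le_mul_of_nonneg_left _ hlam0
        exact_mod_cast hp
      linarith
    linarith
  set H : ℂ → ℂ := fun z => (1 - lamC + lamC * ((p:ℂ) + n)) * G z + lamC * z * deriv G z with hH
  have hHA : AnalyticOnNhd ℂ H (ball 0 1) := by
    apply ((analyticOnNhd_const.mul hGA).add
      ((analyticOnNhd_const.mul analyticOnNhd_id).mul hG'A))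
  have hH'A : AnalyticOnNhd ℂ (deriv H) (ball 0 1) := hHA.deriv
  have hFeq : ∀ z ∈ ball (0:ℂ) 1, F z = α * z ^ p + z ^ (p + n) * H z := by
    intro z hz
    rw [hF z, hf_eq z hz, hdf z hz, hH, hα, hlamC]
    push_cast
    simp only [hpdef]
    rw [show p' + 1 + n = (p' + n) + 1 by omega]
    simp only [pow_succ, pow_add]
    ring
  set K : ℂ → ℂ := fun z => ((p:ℂ) + n) * H z + z * deriv H z with hK
  have hKdiff : DifferentiableOn ℂ K (ball 0 1) := by
    apply DifferentiableOn.add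
    · exact (hHA.differentiableOn.const_mul _)
    · exact differentiableOn_id.mul hH'A.differentiableOn
  have hdF : ∀ z ∈ ball (0:ℂ) 1, deriv F z = α * p * z ^ p' + z ^ (p' + n) * K z := by
    intro z hz
    have hev : F =ᶠ[nhds z] fun w => α * w ^ p + w ^ (p + n) * H w :=
      eventually_of_mem (isOpen_ball.mem_nhds hz) (fun w hw => hFeq w hw)
    rw [hev.deriv_eq]
    have h1 : HasDerivAt (fun w : ℂ => α * w ^ p + w ^ (p + n) * H w)
        (α * ((p:ℂ) * z ^ (p - 1)) + (((p + n : ℕ):ℂ) * z ^ (p + n - 1) * H z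
          + z ^ (p + n) * deriv H z)) z := by
      exact ((hasDerivAt_pow p z).const_mul α).add ((hasDerivAt_pow (p + n) z).mul
        ((hHA z hz).differentiableAt.hasDerivAt))
    rw [h1.deriv]
    have e1 : p - 1 = p' := by omega
    have e2 : p + n - 1 = p' + n := by omega
    rw [e1, e2, hK]
    push_cast
    simp only [hpdef]
    rw [show p' + 1 + n = (p' + n) + 1 by omega]
    simp only [pow_succ, pow_add]
    ring
  set D : ℂ → ℂ := fun z => α * p + z ^ n * K z with hD
  have hzdF : ∀ z ∈ ball (0:ℂ) 1, z * deriv F z = z ^ p * D z := by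
    intro z hz
    rw [hdF z hz, hD]
    simp only [hpdef]
    simp only [pow_succ, pow_add]
    ring
  have hDne : ∀ z ∈ ball (0:ℂ) 1, D z ≠ 0 := by
    intro z hz
    by_cases hz0 : z = 0
    · subst hz0
      simp only [hD, zero_pow hn.ne', zero_mul, add_zero]
      exact mul_ne_zero hαne (Nat.cast_ne_zero.mpr (by omega))
    · have h1 : F z * deriv F z ≠ 0 := hne z hz hz0
      have h2 : deriv F z ≠ 0 := fun h => h1 (by rw [h, mul_zero])
      have h3 : z * deriv F z ≠ 0 := mul_ne_zero hz0 h2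
      rw [hzdF z hz] at h3
      exact fun h => h3 (by rw [h, mul_zero])
  set φf : ℂ → ℂ := fun z => ((p:ℂ) * H z - K z) / ((p:ℂ) * D z) with hφf
  have hφdiff : DifferentiableOn ℂ φf (ball 0 1) := by
    apply DifferentiableOn.div
    · exact (hHA.differentiableOn.const_mul _).sub hKdiff
    · exact (differentiableOn_const _).mul
        (((differentiableOn_pow n).mul hKdiff).const_add _)
    · intro z hz
      exact mul_ne_zero (Nat.cast_ne_zero.mpr (by omega)) (hDne z hz)
  set g : ℂ → ℂ := fun z => z ^ n * φf z with hg
  have hgdiff : DifferentiableOn ℂ g (ball 0 1) :=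
    (differentiableOn_pow n).mul hφdiff
  have hpCne : (p:ℂ) ≠ 0 := Nat.cast_ne_zero.mpr (by omega)
  have key : ∀ (z Hz Kz : ℂ), z ≠ 0 → (α * (p:ℂ) + z ^ n * Kz) ≠ 0 →
      z ^ n * (((p:ℂ) * Hz - Kz) / ((p:ℂ) * (α * (p:ℂ) + z ^ n * Kz)))
        = (α * z ^ p + z ^ (p + n) * Hz) / (z ^ p * (α * (p:ℂ) + z ^ n * Kz)) - 1 / (p:ℂ) := by
    intro z Hz Kz hz0 hDz
    rw [div_sub_div _ _ (mul_ne_zero (pow_ne_zero p hz0) hDz) hpCne, ← mul_div_assoc]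
    rw [div_eq_div_iff (mul_ne_zero hpCne hDz) (mul_ne_zero (mul_ne_zero (pow_ne_zero p hz0) hDz) hpCne)]
    simp only [pow_add]
    ring
  have hgF : ∀ z ∈ ball (0:ℂ) 1, z ≠ 0 →
      g z = F z / (z * deriv F z) - 1 / (p:ℂ) := by
    intro z hz hz0
    rw [hFeq z hz, hzdF z hz]
    exact key z (H z) (K z) hz0 (hDne z hz)
  -- contradiction setup
  intro z1 hz1 hz1ne
  by_contra hcon
  push_neg at hcon
  rw [← hgF z1 hz1 hz1ne] at hcon
  set r1 : ℝ := ‖z1‖ with hr1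
  have hr1pos : 0 < r1 := by simpa [hr1] using hz1ne
  have hr1lt : r1 < 1 := by simpa [hr1, mem_ball_zero_iff] using hz1
  have hsub : closedBall (0:ℂ) r1 ⊆ ball 0 1 := closedBall_subset_ball hr1lt
  have hcl : closure (ball (0:ℂ) r1) = closedBall 0 r1 := closure_ball 0 hr1pos.ne'
  have hfr : frontier (ball (0:ℂ) r1) = sphere 0 r1 := frontier_ball 0 hr1pos.ne'
  obtain ⟨z0, hz0s, hz0max⟩ := (isCompact_sphere (0:ℂ) r1).exists_isMaxOn
    ((NormedSpace.sphere_nonempty).mpr hr1pos.le)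
    ((continuous_norm.comp_continuousOn
      (hgdiff.continuousOn.mono (sphere_subset_closedBall.trans hsub))))
  have hz0r : ‖z0‖ = r1 := by
    simpa [mem_sphere_zero_iff_norm] using hz0s
  have hz0ball : z0 ∈ ball (0:ℂ) 1 := by
    rw [mem_ball_zero_iff]; rw [show ‖z0‖ = ‖z0‖ from rfl, hz0r]; exact hr1lt
  have hz0ne : z0 ≠ 0 := by
    intro h; rw [h] at hz0r; simp at hz0r; exact hr1pos.ne' hz0r.symm
  have hbd : ∀ z ∈ closedBall (0:ℂ) r1, ‖g z‖ ≤ ‖g z0‖ := by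
    intro z hz
    have := Complex.norm_le_of_forall_mem_frontier_norm_le (f := g)
      (U := ball (0:ℂ) r1) isBounded_ball
      (DifferentiableOn.diffContOnCl (by rw [hcl]; exact hgdiff.mono hsub))
      (C := ‖g z0‖) ?_ (z := z) (by rwa [hcl])
    · simpa using this
    · intro w hw
      rw [hfr] at hw
      exact hz0max hw
  have hMle : M ≤ ‖g z0‖ := by
    refine le_trans hcon (hbd z1 ?_)
    exact mem_closedBall_zero_iff.mpr (le_of_eq rfl)
  have hgz0ne : g z0 ≠ 0 := by
    intro h; rw [h] at hMle; simp at hMle; linarith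
  obtain ⟨s, hsge, hseq⟩ := jack_aux hn hgdiff hφdiff (fun z _ => rfl) hz0ball hz0ne hgz0ne
    (by rw [hz0r]; exact hbd)
  -- identities at z0
  have hFz0ne : F z0 ≠ 0 := fun h => hne z0 hz0ball hz0ne (by rw [h, zero_mul])
  have hdFz0ne : deriv F z0 ≠ 0 := fun h => hne z0 hz0ball hz0ne (by rw [h, mul_zero])
  have hzdFne : z0 * deriv F z0 ≠ 0 := mul_ne_zero hz0ne hdFz0ne
  have hq : 1 / (p:ℂ) + g z0 = F z0 / (z0 * deriv F z0) := by
    rw [hgF z0 hz0ball hz0ne]; ring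
  have hqne : 1 / (p:ℂ) + g z0 ≠ 0 := by
    rw [hq]; exact div_ne_zero hFz0ne hzdFne
  -- F analytic
  have hFdiff : DifferentiableOn ℂ F (ball 0 1) := by
    have hFfun : F = fun z => (1 - lamC) * f z + lamC * z * deriv f z := funext hF
    rw [hFfun]
    exact ((hfd.const_mul _)).add
      (((differentiableOn_const _).mul differentiableOn_id).mul (hf.deriv.differentiableOn))
  have hFA : AnalyticOnNhd ℂ F (ball 0 1) := hFdiff.analyticOnNhd isOpen_ball
  have hFd : HasDerivAt F (deriv F z0) z0 := (hFA z0 hz0ball).differentiableAt.hasDerivAt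
  have hF'd : HasDerivAt (deriv F) (deriv (deriv F) z0) z0 :=
    (hFA.deriv z0 hz0ball).differentiableAt.hasDerivAt
  have hden : HasDerivAt (fun z => z * deriv F z)
      (deriv F z0 + z0 * deriv (deriv F) z0) z0 := by
    have h := (hasDerivAt_id' z0).mul hF'd; rw [one_mul] at h; exact h
  have hQ : HasDerivAt (fun z => F z / (z * deriv F z) - 1/(p:ℂ))
      ((deriv F z0 * (z0 * deriv F z0) - F z0 * (deriv F z0 + z0 * deriv (deriv F) z0))
        / (z0 * deriv F z0) ^ 2) z0 :=
    (hFd.div hden hzdFne).sub_const _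
  have hgderiv : deriv g z0
      = (deriv F z0 * (z0 * deriv F z0) - F z0 * (deriv F z0 + z0 * deriv (deriv F) z0))
        / (z0 * deriv F z0) ^ 2 := by
    have hev : g =ᶠ[nhds z0] fun z => F z / (z * deriv F z) - 1/(p:ℂ) := by
      have hopen : IsOpen (ball (0:ℂ) 1 ∩ {(0:ℂ)}ᶜ) := isOpen_ball.inter isOpen_compl_singleton
      filter_upwards [hopen.mem_nhds ⟨hz0ball, hz0ne⟩] with w hw
      exact hgF w hw.1 hw.2
    rw [hev.deriv_eq, hQ.deriv]
  -- main expression identity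
  set A : ℂ := F z0 with hA
  set Bd : ℂ := deriv F z0 with hBd
  set C : ℂ := deriv (deriv F) z0 with hC
  have hexpr : (z0 * Bd / A - 1 - z0 * C / Bd)
      = z0 * deriv g z0 / (1 / (p:ℂ) + g z0) := by
    rw [hgderiv, hq]
    field_simp [hz0ne, hFz0ne, hdFz0ne]
    ring
  have hexpr2 : z0 * deriv g z0 / (1 / (p:ℂ) + g z0) = (s:ℂ) * (g z0 / (1/(p:ℂ) + g z0)) := by
    rw [hseq]; ring
  have hhyp0 := hhyp z0 hz0ball hz0ne
  rw [← hA, ← hBd, ← hC] at hhyp0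
  rw [hexpr, hexpr2] at hhyp0
  rw [Complex.re_ofReal_mul] at hhyp0
  -- real inequalities
  set g0 : ℂ := g z0 with hg0
  set x : ℝ := g0.re with hx
  set y : ℝ := g0.im with hy
  set m' : ℝ := ‖g0‖ with hm'
  have hm'M : M ≤ m' := hMle
  have hxym : x ^ 2 + y ^ 2 = m' ^ 2 := by
    rw [Complex.sq_norm, Complex.normSq_apply, hx, hy]; ring
  have hxlem : x ≤ m' := by
    rw [hx, hm']; exact Complex.re_le_norm g0
  set pinv : ℝ := 1 / (p:ℝ) with hpinv
  have hpinvpos : 0 < pinv := by positivity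
  have hw_re : (1/(p:ℂ) + g0).re = pinv + x := by
    simp [hpinv, hx]
  have hw_im : (1/(p:ℂ) + g0).im = y := by
    simp [hy]
  have hnsq : Complex.normSq (1/(p:ℂ) + g0) = pinv ^ 2 + 2 * pinv * x + m' ^ 2 := by
    rw [Complex.normSq_apply, hw_re, hw_im]
    rw [← hxym]; ring
  have hnsqpos : 0 < Complex.normSq (1/(p:ℂ) + g0) := by
    rw [Complex.normSq_pos]; exact hqne
  have hure : (g0 / (1/(p:ℂ) + g0)).re = (x * pinv + m' ^ 2) / (pinv ^ 2 + 2 * pinv * x + m' ^ 2) := by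
    rw [Complex.div_re, hw_re, hw_im, hnsq, ← add_div]
    congr 1
    linear_combination hxym
  have hMpinv : pinv ≤ M := hM
  have hclow : M / (M + pinv) ≤ (x * pinv + m' ^ 2) / (pinv ^ 2 + 2 * pinv * x + m' ^ 2) := by
    rw [div_le_div_iff₀ (by linarith) (by rw [← hnsq]; exact hnsqpos)]
    exact arith_aux hpinvpos hMpinv hm'M hxlem
  have hceq : M / (M + pinv) = M * (p:ℝ) / (M * (p:ℝ) + 1) := by
    rw [hpinv]
    field_simp
  have hcpos : 0 < M * (p:ℝ) / (M * (p:ℝ) + 1) := by positivity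
  have hupos : 0 ≤ (g0 / (1/(p:ℂ) + g0)).re := by
    rw [hure]; rw [← hure]
    calc (0:ℝ) ≤ M / (M + pinv) := by positivity
      _ ≤ _ := by rw [hure]; exact hclow
  have hfinal : (n:ℝ) * (M * (p:ℝ) / (M * (p:ℝ) + 1)) ≤ s * (g0 / (1/(p:ℂ) + g0)).re := by
    have h1 : (n:ℝ) * (M * (p:ℝ) / (M * (p:ℝ) + 1)) ≤ (n:ℝ) * (g0 / (1/(p:ℂ) + g0)).re := by
      apply mul_le_mul_of_nonneg_left _ (Nat.cast_nonneg n)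
      rw [hure, ← hceq]
      exact hclow
    have h2 : (n:ℝ) * (g0 / (1/(p:ℂ) + g0)).re ≤ s * (g0 / (1/(p:ℂ) + g0)).re :=
      mul_le_mul_of_nonneg_right hsge hupos
    linarith
  have : (n:ℝ) * M * (p:ℝ) / (M * (p:ℝ) + 1) = (n:ℝ) * (M * (p:ℝ) / (M * (p:ℝ) + 1)) := by
    ring
  rw [this] at hhyp0
  linarith
end

section
/- Let p be a positive integer and a a nonzero complex number with |a| ≤ (p/(p+2))·( −(M+p) + √((M+p)² + M²) )/M, where M ≥ p. Then for all z in the open unit disk, |a(p+2)z / (p+1 + a(p+2)z)| < M. -/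
open Metric Complex

theorem stmt_15 (p : ℕ) (hp : 0 < p) (M : ℝ) (hM : (p:ℝ) ≤ M)
    (a : ℂ) (ha : a ≠ 0)
    (habs : ‖a‖ ≤ ((p:ℝ) / ((p:ℝ) + 2))
      * ((-(M + (p:ℝ)) + Real.sqrt ((M + (p:ℝ)) ^ 2 + M ^ 2)) / M)) :
    ∀ z ∈ ball (0:ℂ) 1,
      ‖a * ((p:ℂ) + 2) * z / ((p:ℂ) + 1 + a * ((p:ℂ) + 2) * z)‖ < M := by
  intro z hz
  rw [mem_ball_zero_iff] at hz
  have hz' : ‖z‖ < 1 := hz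
  have hp1 : (1:ℝ) ≤ (p:ℝ) := by exact_mod_cast hp
  have hM0 : (0:ℝ) < M := lt_of_lt_of_le (by linarith) hM
  set S := Real.sqrt ((M + (p:ℝ))^2 + M^2) with hSdef
  have hS2 : S^2 = (M + (p:ℝ))^2 + M^2 := Real.sq_sqrt (by positivity)
  have hSnn : 0 ≤ S := Real.sqrt_nonneg _
  have hS : M + (p:ℝ) ≤ S := by nlinarith [hS2, hSnn]
  set c := ((-(M + (p:ℝ)) + S) / M) with hcdef
  have hc0 : 0 ≤ c := by
    apply div_nonneg _ hM0.le
    linarith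
  have hcM : c * M = -(M + (p:ℝ)) + S := div_mul_cancel₀ _ hM0.ne'
  have h2c : 2 * c * (M + (p:ℝ)) ≤ M := by
    nlinarith [hcM, hS2, sq_nonneg (S - (M + (p:ℝ))), hM0, mul_pos hM0 hM0]
  have hb : 0 ≤ 2 * (M + (p:ℝ)) * ((p:ℝ) + 1) - (p:ℝ) * (1 + M) := by nlinarith
  have hkey : (p:ℝ) * c * (1 + M) ≤ M * ((p:ℝ) + 1) := by
    nlinarith [mul_nonneg hc0 hb, h2c, hM0, hp1, hc0]
  clear_value S
  clear hSdef hS2 hSnn hcM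
  set w := a * ((p:ℂ) + 2) * z with hwdef
  have h2 : ‖((p:ℂ) + 2)‖ = (p:ℝ) + 2 := by
    rw [show ((p:ℂ) + 2) = (((p:ℝ) + 2 : ℝ) : ℂ) by push_cast; ring]
    rw [Complex.norm_real, Real.norm_eq_abs]
    exact abs_of_nonneg (by positivity)
  have ha0 : 0 < ‖a‖ := by
    simpa using norm_pos_iff.mpr ha
  have hwabs : ‖w‖ < (p:ℝ) * c := by
    rw [hwdef, norm_mul, norm_mul, h2]
    have hX : 0 < ‖a‖ * ((p:ℝ) + 2) := by positivity
    have h1 : ‖a‖ * ((p:ℝ) + 2) * ‖z‖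
        < ‖a‖ * ((p:ℝ) + 2) * 1 := by
      exact mul_lt_mul_of_pos_left hz' hX
    have h3 : ‖a‖ * ((p:ℝ) + 2) ≤ (p:ℝ) * c := by
      have h4 := mul_le_mul_of_nonneg_right habs
        (by positivity : (0:ℝ) ≤ (p:ℝ) + 2)
      have h5 : ((p:ℝ) / ((p:ℝ) + 2)) * c * ((p:ℝ) + 2) = (p:ℝ) * c := by
        field_simp
      linarith [h4, h5.le, h5.ge]
    nlinarith [h1, h3]
  set t := ‖w‖ with htdef
  have htnn : 0 ≤ t := norm_nonneg w
  clear_value t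
  have ht1 : t * (1 + M) < M * ((p:ℝ) + 1) := by
    have h6 : t * (1 + M) < (p:ℝ) * c * (1 + M) :=
      mul_lt_mul_of_pos_right hwabs (by linarith)
    linarith
  have htp : t < (p:ℝ) + 1 := by nlinarith [hM0, ht1]
  have hp1c : ‖((p:ℂ) + 1)‖ = (p:ℝ) + 1 := by
    rw [show ((p:ℂ) + 1) = (((p:ℝ) + 1 : ℝ) : ℂ) by push_cast; ring]
    rw [Complex.norm_real, Real.norm_eq_abs]
    exact abs_of_nonneg (by positivity)
  have hden : (p:ℝ) + 1 - t ≤ ‖(p:ℂ) + 1 + w‖ := by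
    have h := norm_add_le ((p:ℂ) + 1 + w) (-w)
    simp only [add_neg_cancel_right, norm_neg] at h
    rw [hp1c, ← htdef] at h
    linarith [h]
  have hdenpos : 0 < ‖(p:ℂ) + 1 + w‖ := by linarith
  rw [norm_div, div_lt_iff₀ hdenpos, ← htdef]
  have hfin : M * ((p:ℝ) + 1 - t) ≤ M * ‖(p:ℂ) + 1 + w‖ :=
    mul_le_mul_of_nonneg_left hden hM0.le
  nlinarith [ht1, hfin, hM0]
end

section
/- Let p be a positive integer and a a nonzero complex number with |a| ≤ p/(p+2) and x := |a|(p+2)/p < 1. Let φ(z) = a(p+2)z/(p+1 + a(p+2)z). Then for all z in the open unit disk, −2x/(1−x²) < Re[ zφ'(z)/(p + φ(z)) ] < 2x/(1−x²). -/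
open Metric Complex

lemma aux_ne_zero (w : ℂ) (c : ℝ) (hc : 0 < c) (h : ‖w‖ < c) :
    (c:ℂ) + w ≠ 0 := by
  intro h0
  have hw : w = -(c:ℂ) := by linear_combination h0
  rw [hw] at h
  simp [Complex.norm_real, abs_of_pos hc] at h

lemma aux_key (w : ℂ) (c r : ℝ) (hc : 0 < c) (hr : r < 1)
    (hw : ‖w‖ < r * c) :
    -r/(1-r) < (w/((c:ℝ)+w)).re ∧ (w/((c:ℝ)+w)).re < r/(1+r) := by
  have hm0 : 0 ≤ ‖w‖ := norm_nonneg w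
  have hr0 : 0 < r := by nlinarith
  have hd : ((c:ℝ):ℂ) + w ≠ 0 := aux_ne_zero w c hc (by nlinarith)
  have hN : 0 < Complex.normSq (((c:ℝ):ℂ) + w) := Complex.normSq_pos.2 hd
  have hNeq : Complex.normSq (((c:ℝ):ℂ) + w) = (c + w.re)^2 + w.im^2 := by
    simp [Complex.normSq_apply, Complex.add_re, Complex.add_im]; ring
  have hre : (w/(((c:ℝ):ℂ)+w)).re
      = (w.re*(c+w.re) + w.im*w.im) / Complex.normSq (((c:ℝ):ℂ)+w) := by
    rw [Complex.div_re]
    simp [Complex.add_re, Complex.add_im]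
    ring
  set m := ‖w‖ with hm
  have h1 : w.re ≤ m := Complex.re_le_norm w
  have h2 : -m ≤ w.re := (abs_le.1 (Complex.abs_re_le_norm w)).1
  have hsq : m^2 = w.re^2 + w.im^2 := by
    rw [hm, Complex.sq_norm, Complex.normSq_apply]; ring
  constructor
  · rw [hre, lt_div_iff₀ hN, hNeq]
    rw [div_mul_eq_mul_div, div_lt_iff₀ (by linarith : (0:ℝ) < 1 - r)]
    nlinarith [mul_pos (sub_pos.2 (lt_of_lt_of_le hw (by nlinarith : r*c ≤ c))) (sub_pos.2 hw), mul_nonneg (by linarith : (0:ℝ) ≤ m + w.re) (by nlinarith : (0:ℝ) ≤ (1+r)*c)]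
  · rw [hre, div_lt_iff₀ hN, hNeq]
    rw [div_mul_eq_mul_div, lt_div_iff₀ (by linarith : (0:ℝ) < 1 + r)]
    nlinarith [mul_pos hc (sub_pos.2 hw), mul_nonneg hm0 (le_of_lt (sub_pos.2 hw)), mul_nonneg (by linarith : (0:ℝ) ≤ m - w.re) (by nlinarith : (0:ℝ) ≤ (1-r)*c)]

theorem stmt_18 (p : ℕ) (hp : 0 < p) (a : ℂ) (ha : a ≠ 0)
    (habs : ‖a‖ ≤ (p:ℝ) / ((p:ℝ) + 2))
    (x : ℝ) (hx : x = ‖a‖ * ((p:ℝ) + 2) / (p:ℝ)) (hx1 : x < 1)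
    (φ : ℂ → ℂ)
    (hφ : ∀ z, φ z = a * ((p:ℂ) + 2) * z / ((p:ℂ) + 1 + a * ((p:ℂ) + 2) * z)) :
    ∀ z ∈ ball (0:ℂ) 1,
      -(2 * x) / (1 - x ^ 2) < (z * deriv φ z / ((p:ℂ) + φ z)).re ∧
      (z * deriv φ z / ((p:ℂ) + φ z)).re < 2 * x / (1 - x ^ 2) := by
  intro z hz
  rw [mem_ball_zero_iff] at hz
  have hp' : (0:ℝ) < p := by exact_mod_cast hp
  have ha0 : 0 < ‖a‖ := norm_pos_iff.mpr ha
  have hx0 : 0 < x := by rw [hx]; positivity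
  set A : ℂ := a * ((p:ℂ) + 2) with hA
  set w : ℂ := A * z with hw
  have habsA : ‖A‖ = x * p := by
    rw [hA, norm_mul, hx]
    have : ‖((p:ℂ) + 2)‖ = (p:ℝ) + 2 := by
      have : ((p:ℂ) + 2) = (((p:ℝ) + 2 : ℝ) : ℂ) := by push_cast; ring
      rw [this, Complex.norm_real, Real.norm_eq_abs, abs_of_pos (by linarith)]
    rw [this]; field_simp
  have hwabs : ‖w‖ < x * p := by
    rw [hw, norm_mul, habsA]
    calc x * (p:ℝ) * ‖z‖ < x * p * 1 := by
          apply mul_lt_mul_of_pos_left hz (by positivity)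
      _ = x * p := by ring
  have hwabs1 : ‖w‖ < x * ((p:ℝ) + 1) := by nlinarith
  have h1 : ((p:ℝ):ℂ) + w ≠ 0 := aux_ne_zero w p hp' (by nlinarith)
  have h2' : (((p:ℝ)+1:ℝ):ℂ) + w ≠ 0 := aux_ne_zero w ((p:ℝ)+1) (by linarith) (by nlinarith)
  have h2 : ((p:ℂ) + 1) + w ≠ 0 := by
    have : (((p:ℝ)+1:ℝ):ℂ) = (p:ℂ) + 1 := by push_cast; ring
    rwa [this] at h2'
  have hφfun : φ = fun t => A * t / (((p:ℂ) + 1) + A * t) := funext hφ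
  have hder : HasDerivAt φ (A * ((p:ℂ)+1) / (((p:ℂ)+1) + A*z)^2) z := by
    rw [hφfun]
    have hα : HasDerivAt (fun t : ℂ => A * t) A z := by
      simpa using (hasDerivAt_id z).const_mul A
    have hβ : HasDerivAt (fun t : ℂ => ((p:ℂ)+1) + A*t) A z := hα.const_add _
    have := hα.div hβ (by rwa [← hw])
    rw [show A * ((p:ℂ)+1) / (((p:ℂ)+1) + A*z)^2 = (A * ((p:ℂ) + 1 + A * z) - A * z * A) / ((p:ℂ) + 1 + A * z) ^ 2 by ring]
    exact this
  have hD : deriv φ z = A * ((p:ℂ)+1) / (((p:ℂ)+1) + w)^2 := by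
    rw [hder.deriv, hw]
  have hB1 : ((p:ℂ) + 1) ≠ 0 := by
    intro h; have := congrArg Complex.re h; simp at this; linarith
  have h4 : (p:ℂ) * (((p:ℂ)+1) + w) + w ≠ 0 := by
    have he : (p:ℂ) * (((p:ℂ)+1) + w) + w = ((p:ℂ)+1) * (((p:ℝ):ℂ) + w) := by
      push_cast; ring
    rw [he]; exact mul_ne_zero hB1 h1
  have hE : z * deriv φ z / ((p:ℂ) + φ z)
      = w/(((p:ℝ):ℂ)+w) - w/((((p:ℝ)+1:ℝ):ℂ)+w) := by
    rw [hD, hφ z]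
    have hwz : a * ((p:ℂ) + 2) * z = w := by rw [hw, hA]
    rw [hwz]
    have hc1 : (((p:ℝ):ℂ)) = (p:ℂ) := by push_cast; ring
    have hc2 : ((((p:ℝ)+1:ℝ)):ℂ) = (p:ℂ) + 1 := by push_cast; ring
    rw [hc1, hc2]
    rw [hc1] at h1
    rw [show (p:ℂ) + 1 + w = ((p:ℂ)+1) + w by ring] at *
    field_simp
    ring
  have k1 := aux_key w p x hp' hx1 hwabs
  have k2 := aux_key w ((p:ℝ)+1) x (by linarith) hx1 hwabs1
  rw [neg_div] at k1 k2
  have h1x : (0:ℝ) < 1 + x := by linarith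
  have h2x : (0:ℝ) < 1 - x := by linarith
  have hne3 : (1:ℝ) - x^2 ≠ 0 := by nlinarith
  have e1 : 2*x/(1-x^2) = x/(1-x) + x/(1+x) := by
    field_simp
    ring
  have e2 : -(2*x)/(1-x^2) = -(x/(1-x)) - x/(1+x) := by
    field_simp
    ring
  rw [hE, Complex.sub_re]
  constructor
  · rw [e2]
    have := k1.1
    have := k2.2
    linarith
  · rw [e1]
    have := k1.2
    have := k2.1
    linarith
end
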